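/- arXiv:1910.13156 — 10 statements merged into one kernel-verified Lean document; each statement's English description precedes it below -/
import Mathlib

section
/- Let 0 < μ < λ2, α > 0, σ > 0, κ ≥ 0 and p ∈ (0,1). Then the pair (n_{2a}, n_{2d}) of strictly positive reals satisfies the equilibrium equations n_{2a}(λ2 − μ − α n_{2a}) + σ n_{2d} = 0 and p α n_{2a}² − (κμ + σ) n_{2d} = 0 if and only if n_{2a} = (λ2 − μ)(κμ + σ)/(α(κμ + (1−p)σ)) and n_{2d} = (λ2 − μ)² p (κμ + σ)/(α (κμ + (1−p)σ)²). In particular, the two-dimensional mutant ODE system has a unique coordinatewise positive equilibrium. -/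
/-- For `0 < μ < λ2`, `α > 0`, `σ > 0`, `κ ≥ 0`, `p ∈ (0,1)`, a pair
`(n2a, n2d)` of strictly positive reals satisfies the equilibrium equations of the
two-dimensional mutant ODE system iff it equals the explicit equilibrium; in
particular the system has a unique coordinatewise positive equilibrium. -/
theorem mutant_positive_equilibrium_unique
    (μ lam2 α σ κ p : ℝ)
    (hμ : 0 < μ) (hμlam : μ < lam2) (hα : 0 < α) (hσ : 0 < σ) (hκ : 0 ≤ κ)
    (hp0 : 0 < p) (hp1 : p < 1)
    (n2a n2d : ℝ) (ha : 0 < n2a) (hd : 0 < n2d) :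
    (n2a * (lam2 - μ - α * n2a) + σ * n2d = 0 ∧
      p * α * n2a ^ 2 - (κ * μ + σ) * n2d = 0) ↔
    (n2a = (lam2 - μ) * (κ * μ + σ) / (α * (κ * μ + (1 - p) * σ)) ∧
      n2d = (lam2 - μ) ^ 2 * p * (κ * μ + σ) / (α * (κ * μ + (1 - p) * σ) ^ 2)) := by
  have hS : 0 < κ * μ + σ := by positivity
  have hD : 0 < κ * μ + (1 - p) * σ := by
    have h1p : 0 < (1 - p) * σ := mul_pos (by linarith) hσ
    nlinarith [mul_nonneg hκ hμ.le]
  have hSne : κ * μ + σ ≠ 0 := hS.ne'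
  have hDne : κ * μ + (1 - p) * σ ≠ 0 := hD.ne'
  constructor
  · rintro ⟨h1, h2⟩
    -- solve for n2d from h2
    have hd2 : n2d = p * α * n2a ^ 2 / (κ * μ + σ) := by
      field_simp
      linarith
    rw [hd2] at h1
    have h1' : n2a * ((lam2 - μ) * (κ * μ + σ) - α * (κ * μ + (1 - p) * σ) * n2a) = 0 := by
      field_simp at h1
      ring_nf
      ring_nf at h1
      nlinarith [h1]
    have hfac : (lam2 - μ) * (κ * μ + σ) - α * (κ * μ + (1 - p) * σ) * n2a = 0 := by
      rcases mul_eq_zero.mp h1' with h | h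
      · exact absurd h ha.ne'
      · exact h
    have han : n2a = (lam2 - μ) * (κ * μ + σ) / (α * (κ * μ + (1 - p) * σ)) := by
      rw [eq_div_iff (mul_ne_zero hα.ne' hDne)]
      linear_combination -hfac
    refine ⟨han, ?_⟩
    rw [hd2, han]
    field_simp
  · rintro ⟨h1, h2⟩
    subst h1 h2
    constructor
    · field_simp [show μ * κ + σ * (1 - p) ≠ 0 by rw [mul_comm μ, mul_comm σ]; exact hDne]
      ring
    · field_simp
      ring
end

section
/- Let 0 < μ < λ2, α > 0, σ > 0, κ ≥ 0 and p ∈ (0,1), and let n̄_{2a} = (λ2 − μ)(κμ + σ)/(α(κμ + (1−p)σ)) and n̄_{2d} = (λ2 − μ)² p (κμ + σ)/(α (κμ + (1−p)σ)²). Consider the real 2×2 Jacobian matrix A = [[λ2 − μ − 2α n̄_{2a}, σ], [2pα n̄_{2a}, −κμ − σ]]. Then det A = (κμ + σ)(λ2 − μ) > 0 and trace A < 0, and consequently every complex eigenvalue of A has strictly negative real part. -/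
open Matrix

/-- A root of `z^2 - t z + d` with `t < 0 < d` has negative real part. -/
lemma quad_root_neg_re (t d : ℝ) (ht : t < 0) (hd : 0 < d) (z : ℂ)
    (hz : z ^ 2 - (t : ℂ) * z + (d : ℂ) = 0) : z.re < 0 := by
  have h1 := congrArg Complex.re hz
  have h2 := congrArg Complex.im hz
  simp [pow_two, Complex.mul_re, Complex.mul_im] at h1 h2
  set x := z.re
  set y := z.im
  have h2' : y * (2 * x - t) = 0 := by ring_nf; ring_nf at h2; linarith
  rcases mul_eq_zero.1 h2' with hy | hx
  · -- y = 0, so x² - t x + d = 0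
    have hx2 : x * x - t * x + d = 0 := by rw [hy] at h1; linarith
    by_contra hge
    push_neg at hge
    nlinarith
  · have : x = t / 2 := by linarith
    rw [this]; linarith

/-- At the positive equilibrium of the two-dimensional mutant ODE system,
the Jacobian `A = [[λ2 − μ − 2α n̄2a, σ], [2pα n̄2a, −κμ − σ]]` has
`det A = (κμ + σ)(λ2 − μ) > 0` and negative trace, hence every complex eigenvalue of `A`
has strictly negative real part. -/
theorem jacobian_at_positive_equilibrium_stable
    (μ lam2 α σ κ p : ℝ)
    (hμ : 0 < μ) (hμlam : μ < lam2) (hα : 0 < α) (hσ : 0 < σ) (hκ : 0 ≤ κ)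
    (hp0 : 0 < p) (hp1 : p < 1) :
    let n2a : ℝ := (lam2 - μ) * (κ * μ + σ) / (α * (κ * μ + (1 - p) * σ))
    let A : Matrix (Fin 2) (Fin 2) ℝ :=
      !![lam2 - μ - 2 * α * n2a, σ; 2 * p * α * n2a, -(κ * μ) - σ]
    A.det = (κ * μ + σ) * (lam2 - μ) ∧ 0 < A.det ∧ A.trace < 0 ∧
      ∀ z : ℂ, z ∈ spectrum ℂ (A.map Complex.ofReal) → z.re < 0 := by
  intro n2a A
  have hD : 0 < κ * μ + (1 - p) * σ := by nlinarith
  have hDα : α * (κ * μ + (1 - p) * σ) ≠ 0 := by positivity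
  have hn2a : α * n2a = (lam2 - μ) * (κ * μ + σ) / (κ * μ + (1 - p) * σ) := by
    simp only [n2a]; rw [mul_div_assoc', div_eq_div_iff hDα hD.ne']
    ring
  have hdet : A.det = (κ * μ + σ) * (lam2 - μ) := by
    have : A.det = (lam2 - μ - 2 * α * n2a) * (-(κ * μ) - σ) - σ * (2 * p * α * n2a) := by
      simp [A, Matrix.det_fin_two_of]
    rw [this]
    have h2 : α * n2a * (κ * μ + (1 - p) * σ) = (lam2 - μ) * (κ * μ + σ) := by
      rw [hn2a]; field_simp; exact mul_div_cancel_right₀ _ (ne_of_gt (by nlinarith))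
    nlinarith [h2]
  have hdetpos : 0 < A.det := by
    rw [hdet]; exact mul_pos (by positivity) (by linarith)
  have hge : lam2 - μ ≤ α * n2a := by
    rw [hn2a]
    rw [le_div_iff₀ hD]
    nlinarith [mul_nonneg (sub_pos.2 hμlam).le (mul_pos hp0 hσ).le]
  have htr : A.trace < 0 := by
    have : A.trace = lam2 - μ - 2 * α * n2a + (-(κ * μ) - σ) := by
      simp [A, Matrix.trace_fin_two_of]
    rw [this]
    nlinarith
  refine ⟨hdet, hdetpos, htr, ?_⟩
  intro z hz
  rw [spectrum.mem_iff] at hz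
  set B := A.map Complex.ofReal with hB
  have hdet0 : ((algebraMap ℂ (Matrix (Fin 2) (Fin 2) ℂ)) z - B).det = 0 := by
    by_contra h
    exact hz ((Matrix.isUnit_iff_isUnit_det _).2 (Ne.isUnit h))
  have hentry : ((algebraMap ℂ (Matrix (Fin 2) (Fin 2) ℂ)) z - B) =
      !![z - (A 0 0 : ℂ), -(A 0 1 : ℂ); -(A 1 0 : ℂ), z - (A 1 1 : ℂ)] := by
    ext i j
    fin_cases i <;> fin_cases j <;>
      simp [hB, A, Matrix.algebraMap_eq_diagonal, Matrix.map_apply, Matrix.diagonal_apply]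
  rw [hentry, Matrix.det_fin_two_of] at hdet0
  have hquad : z ^ 2 - (A.trace : ℂ) * z + (A.det : ℂ) = 0 := by
    have htr2 : (A.trace : ℂ) = (A 0 0 : ℂ) + (A 1 1 : ℂ) := by
      rw [Matrix.trace_fin_two]; push_cast; ring
    have hdt2 : (A.det : ℂ) = (A 0 0 : ℂ) * (A 1 1 : ℂ) - (A 0 1 : ℂ) * (A 1 0 : ℂ) := by
      rw [Matrix.det_fin_two]; push_cast; ring
    rw [htr2, hdt2]
    linear_combination hdet0
  exact quad_root_neg_re A.trace A.det htr hdetpos z hquad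
end

section
/- Let 0 < μ < λ2 < λ1, σ > 0, κ ≥ 0 and p ∈ (0,1), and let J = [[λ2 − λ1, p(λ1 − μ)], [σ, −κμ − σ]]. Then J has a strictly positive real eigenvalue if and only if λ1 − λ2 < p(λ1 − μ) σ/(κμ + σ); moreover, since trace J < 0, J never has two eigenvalues with positive real part. -/
open Matrix

lemma spec_fin_two {K : Type*} [Field K] (a b c d r : K) :
    r ∈ spectrum K !![a,b;c,d] ↔ (r-a)*(r-d)-b*c = 0 := by
  rw [spectrum.mem_iff, Matrix.isUnit_iff_isUnit_det, isUnit_iff_ne_zero, not_ne_iff]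
  simp [Matrix.det_fin_two, Matrix.algebraMap_eq_diagonal]

/-- For `0 < μ < λ2 < λ1`, the mean matrix
`J = [[λ2 − λ1, p(λ1 − μ)], [σ, −κμ − σ]]` has a strictly positive real eigenvalue iff
the invasion condition `λ1 − λ2 < p(λ1 − μ)σ/(κμ + σ)` holds; moreover `trace J < 0`
and `J` never has two (distinct) eigenvalues with positive real part. -/
theorem mean_matrix_positive_eigenvalue_iff_invasion
    (lam1 lam2 μ σ κ p : ℝ)
    (hμ : 0 < μ) (hμlam : μ < lam2) (hlam : lam2 < lam1) (hσ : 0 < σ)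
    (hκ : 0 ≤ κ) (hp0 : 0 < p) (hp1 : p < 1) :
    let J : Matrix (Fin 2) (Fin 2) ℝ :=
      !![lam2 - lam1, p * (lam1 - μ); σ, -(κ * μ) - σ]
    ((∃ r : ℝ, 0 < r ∧ r ∈ spectrum ℝ J) ↔
        lam1 - lam2 < p * (lam1 - μ) * σ / (κ * μ + σ)) ∧
      J.trace < 0 ∧
      ∀ z w : ℂ, z ∈ spectrum ℂ (J.map Complex.ofReal) →
        w ∈ spectrum ℂ (J.map Complex.ofReal) → 0 < z.re → 0 < w.re → z = w := by
  intro J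
  set a : ℝ := lam2 - lam1 with ha
  set b : ℝ := p * (lam1 - μ) with hb
  set c : ℝ := σ with hc
  set d : ℝ := -(κ * μ) - σ with hd
  have ha0 : a < 0 := by simp [ha]; linarith
  have hb0 : 0 < b := by have : 0 < lam1 - μ := by linarith
                         exact mul_pos hp0 this
  have hd0 : d < 0 := by
    have : 0 ≤ κ * μ := mul_nonneg hκ hμ.le
    simp [hd]; linarith
  have hden : 0 < κ * μ + σ := by
    have : 0 ≤ κ * μ := mul_nonneg hκ hμ.le
    linarith
  -- invasion condition ↔ det < 0
  have hinv : (lam1 - lam2 < p * (lam1 - μ) * σ / (κ * μ + σ)) ↔ a * d - b * c < 0 := by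
    rw [lt_div_iff₀ hden]
    constructor <;> intro h <;> [nlinarith; nlinarith]
  have hJmem : ∀ r : ℝ, r ∈ spectrum ℝ J ↔ (r - a) * (r - d) - b * c = 0 := by
    intro r; exact spec_fin_two a b c d r
  refine ⟨?_, ?_, ?_⟩
  · rw [hinv]
    constructor
    · rintro ⟨r, hr, hmem⟩
      rw [hJmem] at hmem
      nlinarith [mul_pos (by linarith : (0:ℝ) < r - a) (by linarith : (0:ℝ) < r - d)]
    · intro hdet
      set t : ℝ := Real.sqrt ((a + d) ^ 2 - 4 * (a * d - b * c)) with htdef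
      have hdisc : 0 ≤ (a + d) ^ 2 - 4 * (a * d - b * c) := by nlinarith [sq_nonneg (a + d)]
      have ht2 : t ^ 2 = (a + d) ^ 2 - 4 * (a * d - b * c) := Real.sq_sqrt hdisc
      have htnn : 0 ≤ t := Real.sqrt_nonneg _
      have htgt : -(a + d) < t := by nlinarith
      refine ⟨(a + d + t) / 2, by linarith, ?_⟩
      rw [hJmem]
      nlinarith
  · show Matrix.trace J < 0
    have : Matrix.trace J = a + d := by
      simp [Matrix.trace_fin_two, J, ha, hb, hc, hd]
    rw [this]; linarith
  · intro z w hz hw hzre hwre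
    have hmap : J.map Complex.ofReal = !![(a : ℂ), (b : ℂ); (c : ℂ), (d : ℂ)] := by
      ext i j
      fin_cases i <;> fin_cases j <;> simp [J, Matrix.map_apply, ha, hb, hc, hd]
    rw [hmap, spec_fin_two] at hz hw
    by_contra hne
    have hsum : z + w = (a : ℂ) + (d : ℂ) := by
      have h1 : (z - w) * (z + w - ((a : ℂ) + (d : ℂ))) = 0 := by ring_nf; linear_combination hz - hw
      rcases mul_eq_zero.mp h1 with h | h
      · exact absurd (sub_eq_zero.mp h) hne
      · exact sub_eq_zero.mp h
    have : z.re + w.re = a + d := by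
      have := congrArg Complex.re hsum
      simpa using this
    linarith
end

section
/- Let 0 < μ < λ2 < λ1, α > 0, σ > 0, κ ≥ 0 and p ∈ (0,1), and assume the invasion condition λ1 − λ2 < p(λ1 − μ) σ/(κμ + σ). Set n̄1 = (λ1 − μ)/α, n̄_{2a} = (λ2 − μ)(κμ + σ)/(α(κμ + (1−p)σ)) and n̄_{2d} = (λ2 − μ)² p (κμ + σ)/(α (κμ + (1−p)σ)²). Then the set of coordinatewise nonnegative equilibria of the three-dimensional Lotka–Volterra-type system, i.e. of triples (n1, n_{2a}, n_{2d}) ∈ [0,∞)³ satisfying n1(λ1 − μ − α(n1 + n_{2a})) = 0, n_{2a}(λ2 − μ − α(n1 + n_{2a})) + σ n_{2d} = 0, and pα n_{2a}(n1 + n_{2a}) − (κμ + σ) n_{2d} = 0, is exactly {(0,0,0), (n̄1, 0, 0), (0, n̄_{2a}, n̄_{2d})}. -/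
/-- Under the invasion condition, the set of coordinatewise nonnegative
equilibria of the three-dimensional Lotka–Volterra-type system is exactly
`{(0,0,0), (n̄1,0,0), (0,n̄2a,n̄2d)}`. -/
theorem lotka_volterra_equilibria
    (lam1 lam2 μ α σ κ p : ℝ)
    (hμ : 0 < μ) (hμlam : μ < lam2) (hlam : lam2 < lam1) (hα : 0 < α) (hσ : 0 < σ)
    (hκ : 0 ≤ κ) (hp0 : 0 < p) (hp1 : p < 1)
    (hinv : lam1 - lam2 < p * (lam1 - μ) * σ / (κ * μ + σ)) :
    let n1bar : ℝ := (lam1 - μ) / α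
    let n2abar : ℝ := (lam2 - μ) * (κ * μ + σ) / (α * (κ * μ + (1 - p) * σ))
    let n2dbar : ℝ := (lam2 - μ) ^ 2 * p * (κ * μ + σ) / (α * (κ * μ + (1 - p) * σ) ^ 2)
    {x : ℝ × ℝ × ℝ |
        0 ≤ x.1 ∧ 0 ≤ x.2.1 ∧ 0 ≤ x.2.2 ∧
        x.1 * (lam1 - μ - α * (x.1 + x.2.1)) = 0 ∧
        x.2.1 * (lam2 - μ - α * (x.1 + x.2.1)) + σ * x.2.2 = 0 ∧
        p * α * x.2.1 * (x.1 + x.2.1) - (κ * μ + σ) * x.2.2 = 0} =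
      {((0 : ℝ), (0 : ℝ), (0 : ℝ)), (n1bar, 0, 0), (0, n2abar, n2dbar)} := by
  intro n1bar n2abar n2dbar
  unfold n1bar n2abar n2dbar
  have hD : 0 < κ * μ + σ := by positivity
  have hE : 0 < κ * μ + (1 - p) * σ := by nlinarith
  have hinv' : (lam1 - lam2) * (κ * μ + σ) < p * (lam1 - μ) * σ :=
    (lt_div_iff₀ hD).mp hinv
  have hlm : (0:ℝ) < lam2 - μ := by linarith
  ext ⟨n1, n2a, n2d⟩
  simp only [Set.mem_setOf_eq, Set.mem_insert_iff, Set.mem_singleton_iff, Prod.mk.injEq]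
  constructor
  · rintro ⟨h1n, h2n, h3n, h1, h2, h3⟩
    have key : n2a * ((κ*μ+σ)*(lam2-μ) - α*(n1+n2a)*(κ*μ+(1-p)*σ)) = 0 := by
      linear_combination (κ*μ+σ)*h2 + σ*h3
    rcases mul_eq_zero.mp key with h0 | hS
    · subst h0
      have hd : n2d = 0 := by nlinarith [h3]
      subst hd
      rcases mul_eq_zero.mp h1 with h | h
      · exact Or.inl ⟨h, rfl, rfl⟩
      · refine Or.inr (Or.inl ⟨?_, rfl, rfl⟩)
        rw [eq_div_iff hα.ne']
        linarith
    · have hSval : α*(n1+n2a) = (κ*μ+σ)*(lam2-μ)/(κ*μ+(1-p)*σ) := by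
        rw [eq_div_iff hE.ne']
        linarith
      have hneg : lam1 - μ - α*(n1+n2a) < 0 := by
        rw [hSval, sub_neg, lt_div_iff₀ hE]
        nlinarith
      have hn1 : n1 = 0 := by
        rcases mul_eq_zero.mp h1 with h | h
        · exact h
        · linarith
      subst hn1
      have hA : n2a * (α*(κ*μ+(1-p)*σ)) = (lam2-μ)*(κ*μ+σ) := by
        linear_combination -hS
      have hd : (κ*μ+σ) * n2d = p*α*n2a^2 := by linear_combination -h3
      refine Or.inr (Or.inr ⟨rfl, ?_, ?_⟩)
      · rw [eq_div_iff (by positivity)]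
        exact hA
      · rw [eq_div_iff (by positivity)]
        have hd2 : (κ*μ+σ) * (n2d * (α*(κ*μ+(1-p)*σ)^2)) =
            (κ*μ+σ) * ((lam2-μ)^2*p*(κ*μ+σ)) := by
          linear_combination (α*(κ*μ+(1-p)*σ)^2)*hd +
            p*(n2a*(α*(κ*μ+(1-p)*σ)) + (lam2-μ)*(κ*μ+σ))*hA
        exact mul_left_cancel₀ hD.ne' hd2
  · rintro (⟨e1, e2, e3⟩ | ⟨e1, e2, e3⟩ | ⟨e1, e2, e3⟩) <;> subst e1 <;> subst e2 <;> subst e3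
    · norm_num
    · refine ⟨div_nonneg (by linarith) hα.le, le_refl 0, le_refl 0, ?_, by ring, by ring⟩
      have : α * ((lam1 - μ)/α + 0) = lam1 - μ := by field_simp; ring
      rw [this]
      ring
    · refine ⟨le_refl 0, by positivity, by positivity, by ring_nf, ?_, ?_⟩
      · have hE' : μ * κ + σ * (1 - p) ≠ 0 := by nlinarith
        have hα' := hα.ne'
        rw [zero_add]
        field_simp
        ring
      · have hE' : μ * κ + σ * (1 - p) ≠ 0 := by nlinarith
        have hα' := hα.ne'
        rw [zero_add]
        field_simp
        ring
end

section
/- Let 0 < μ < λ2 < λ1, σ > 0, κ ≥ 0 and p ∈ (0,1), and assume the invasion condition λ1 − λ2 < p(λ1 − μ) σ/(κμ + σ). Consider the real 3×3 matrix B = [[−λ1 + μ, −λ1 + μ, 0], [0, λ2 − λ1, σ], [0, p(λ1 − μ), −(κμ + σ)]] (the Jacobian of the three-dimensional Lotka–Volterra-type system at the equilibrium (n̄1, 0, 0) with n̄1 = (λ1 − μ)/α). Then det B > 0, all eigenvalues of B are real, and B has a strictly positive eigenvalue; in particular the equilibrium (n̄1, 0, 0) is linearly unstable. -/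
open Matrix

lemma scalar_sub_fin3 {R : Type*} [CommRing R] (z a b c d e f g h i : R) :
    Matrix.scalar (Fin 3) z - !![a, b, c; d, e, f; g, h, i]
      = !![z - a, -b, -c; -d, z - e, -f; -g, -h, z - i] := by
  ext i j
  fin_cases i <;> fin_cases j <;>
    simp [Matrix.scalar, Matrix.diagonal, Matrix.sub_apply]

lemma map_fin3 {R S : Type*} (φ : R → S) (a b c d e f g h i : R) :
    (!![a, b, c; d, e, f; g, h, i]).map φ
      = !![φ a, φ b, φ c; φ d, φ e, φ f; φ g, φ h, φ i] := by
  ext i j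
  fin_cases i <;> fin_cases j <;> simp [Matrix.map_apply]

lemma det_special3 {R : Type*} [CommRing R] (a b c d e z : R) :
    (Matrix.scalar (Fin 3) z - !![a, a, 0; 0, b, c; 0, d, e]).det
      = (z - a) * ((z - b) * (z - e) - c * d) := by
  rw [scalar_sub_fin3, Matrix.det_fin_three]
  simp [Matrix.vecHead, Matrix.vecTail]
  ring

lemma mem_spectrum_iff_det (M : Matrix (Fin 3) (Fin 3) ℝ) (r : ℝ) :
    r ∈ spectrum ℝ M ↔ (Matrix.scalar (Fin 3) r - M).det = 0 := by
  rw [spectrum.mem_iff, Matrix.isUnit_iff_isUnit_det]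
  simp only [isUnit_iff_ne_zero, not_ne_iff]
  rfl

lemma mem_spectrum_iff_det' (M : Matrix (Fin 3) (Fin 3) ℂ) (z : ℂ) :
    z ∈ spectrum ℂ M ↔ (Matrix.scalar (Fin 3) z - M).det = 0 := by
  rw [spectrum.mem_iff, Matrix.isUnit_iff_isUnit_det]
  simp only [isUnit_iff_ne_zero, not_ne_iff]
  rfl

/-- Under the invasion condition, the Jacobian
`B = [[−λ1 + μ, −λ1 + μ, 0], [0, λ2 − λ1, σ], [0, p(λ1 − μ), −(κμ + σ)]]` at the
resident equilibrium `(n̄1, 0, 0)` has positive determinant, only real eigenvalues,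
and a strictly positive eigenvalue; in particular `(n̄1, 0, 0)` is linearly unstable. -/
theorem resident_equilibrium_unstable
    (lam1 lam2 μ σ κ p : ℝ)
    (hμ : 0 < μ) (hμlam : μ < lam2) (hlam : lam2 < lam1) (hσ : 0 < σ)
    (hκ : 0 ≤ κ) (hp0 : 0 < p) (hp1 : p < 1)
    (hinv : lam1 - lam2 < p * (lam1 - μ) * σ / (κ * μ + σ)) :
    let B : Matrix (Fin 3) (Fin 3) ℝ :=
      !![-lam1 + μ, -lam1 + μ, 0;
         0, lam2 - lam1, σ;
         0, p * (lam1 - μ), -(κ * μ + σ)]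
    0 < B.det ∧
      (∀ z : ℂ, z ∈ spectrum ℂ (B.map Complex.ofReal) → z.im = 0) ∧
      ∃ r : ℝ, 0 < r ∧ r ∈ spectrum ℝ B := by
  intro B
  have hc : 0 < κ * μ + σ := by positivity
  have hinv' : (lam1 - lam2) * (κ * μ + σ) < p * (lam1 - μ) * σ :=
    (lt_div_iff₀ hc).mp hinv
  -- quadratic data
  set t : ℝ := (lam2 - lam1) - (κ * μ + σ) with ht
  set dd : ℝ := (lam1 - lam2) * (κ * μ + σ) - σ * (p * (lam1 - μ)) with hdd
  have hddneg : dd < 0 := by nlinarith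
  set disc : ℝ := t ^ 2 - 4 * dd with hdisc
  have hdiscpos : 0 < disc := by nlinarith [sq_nonneg t]
  set s : ℝ := Real.sqrt disc with hs
  have hs0 : 0 ≤ s := Real.sqrt_nonneg _
  have hs2 : s ^ 2 = disc := Real.sq_sqrt hdiscpos.le
  have htneg : t < 0 := by
    have : lam2 - lam1 < 0 := by linarith
    nlinarith
  set r : ℝ := (t + s) / 2 with hr
  set r2 : ℝ := (t - s) / 2 with hr2
  have hrpos : 0 < r := by
    have hst : -t < s := by nlinarith
    rw [hr]; linarith
  have hsum : r + r2 = t := by rw [hr, hr2]; ring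
  have hprod : r * r2 = dd := by
    have : r * r2 = (t ^ 2 - s ^ 2) / 4 := by rw [hr, hr2]; ring
    rw [this, hs2, hdisc]; ring
  refine ⟨?_, ?_, ?_⟩
  · -- determinant positive
    show (0 : ℝ) < Matrix.det (!![-lam1 + μ, -lam1 + μ, 0;
         0, lam2 - lam1, σ;
         0, p * (lam1 - μ), -(κ * μ + σ)])
    rw [Matrix.det_fin_three]
    simp [Matrix.vecHead, Matrix.vecTail]
    nlinarith
  · -- all eigenvalues real
    intro z hz
    rw [show B.map Complex.ofReal
        = !![(↑(-lam1 + μ) : ℂ), ↑(-lam1 + μ), 0;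
             0, ↑(lam2 - lam1), ↑σ;
             0, ↑(p * (lam1 - μ)), ↑(-(κ * μ + σ))] by
          rw [map_fin3]; norm_num,
      mem_spectrum_iff_det', det_special3] at hz
    have hfac : ((z : ℂ) - ↑(lam2 - lam1)) * (z - ↑(-(κ * μ + σ)))
        - ↑σ * ↑(p * (lam1 - μ)) = (z - ↑r) * (z - ↑r2) := by
      have h1 : (↑r : ℂ) + ↑r2 = ↑t := by push_cast; exact_mod_cast congrArg Complex.ofReal hsum
      have h2 : (↑r : ℂ) * ↑r2 = ↑dd := by exact_mod_cast congrArg Complex.ofReal hprod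
      have h1' : (↑r : ℂ) + ↑r2 = ↑(lam2 - lam1) + ↑(-(κ * μ + σ)) := by
        rw [h1, ht]; push_cast; ring
      have h2' : (↑r : ℂ) * ↑r2 = ↑(lam2 - lam1) * ↑(-(κ * μ + σ)) - ↑σ * ↑(p * (lam1 - μ)) := by
        rw [h2, hdd]; push_cast; ring
      linear_combination z * h1' - h2'
    rw [hfac] at hz
    rcases mul_eq_zero.mp hz with h | h
    · have : z = ↑(-lam1 + μ) := by linear_combination h
      rw [this]; simp
    · rcases mul_eq_zero.mp h with h' | h'
      · have : z = ↑r := by linear_combination h'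
        rw [this]; simp
      · have : z = ↑r2 := by linear_combination h'
        rw [this]; simp
  · -- positive real eigenvalue
    refine ⟨r, hrpos, ?_⟩
    have hBdef : B = !![-lam1 + μ, -lam1 + μ, 0;
         0, lam2 - lam1, σ;
         0, p * (lam1 - μ), -(κ * μ + σ)] := rfl
    rw [hBdef, mem_spectrum_iff_det, det_special3]
    have hq : (r - (lam2 - lam1)) * (r - (-(κ * μ + σ))) - σ * (p * (lam1 - μ)) = 0 := by
      have h5 : (2 * r - t) = s := by rw [hr]; ring
      have h6 : (2 * r - t) ^ 2 = t ^ 2 - 4 * dd := by rw [h5, hs2, hdisc]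
      have hkey : r * r - t * r + dd = 0 := by linarith [sq_nonneg (2*r - t), h6, sq_abs (2*r-t)]
      rw [ht, hdd] at hkey
      linear_combination hkey
    rw [hq]; ring
end

section
/- Let 0 < μ < λ2 < λ1, α > 0, σ > 0, κ ≥ 0 and p ∈ (0,1), and assume the invasion condition λ1 − λ2 < p(λ1 − μ) σ/(κμ + σ). Set n̄_{2a} = (λ2 − μ)(κμ + σ)/(α(κμ + (1−p)σ)) and n̄_{2d} = (λ2 − μ)² p (κμ + σ)/(α (κμ + (1−p)σ)²). Then every complex eigenvalue of the 3×3 matrix B = [[λ1 − μ − α n̄_{2a}, 0, 0], [0, λ2 − μ − 2α n̄_{2a}, σ], [pα n̄_{2a}, 2pα n̄_{2a}, −(κμ + σ)]] has strictly negative real part; in particular the equilibrium (0, n̄_{2a}, n̄_{2d}) of the three-dimensional Lotka–Volterra-type system is asymptotically stable. -/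
open Matrix

lemma quad_root_re_neg (β γ : ℝ) (hβ : 0 < β) (hγ : 0 < γ)
    (z : ℂ) (h : z * z + (β : ℂ) * z + (γ : ℂ) = 0) : z.re < 0 := by
  have him : z.im * (2 * z.re + β) = 0 := by
    have h2 := congrArg Complex.im h
    simp [Complex.add_im, Complex.mul_im] at h2
    nlinarith [h2]
  have hre : z.re * z.re - z.im * z.im + β * z.re + γ = 0 := by
    have h2 := congrArg Complex.re h
    simp [Complex.add_re, Complex.mul_re] at h2
    linarith [h2]
  rcases mul_eq_zero.mp him with h0 | h0
  · nlinarith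
  · nlinarith

/-- Under the invasion condition, every complex eigenvalue of the Jacobian
of the three-dimensional Lotka–Volterra-type system at the equilibrium
`(0, n̄2a, n̄2d)` has strictly negative real part; in particular this equilibrium is
asymptotically stable. -/
theorem mutant_equilibrium_stable
    (lam1 lam2 μ α σ κ p : ℝ)
    (hμ : 0 < μ) (hμlam : μ < lam2) (hlam : lam2 < lam1) (hα : 0 < α) (hσ : 0 < σ)
    (hκ : 0 ≤ κ) (hp0 : 0 < p) (hp1 : p < 1)
    (hinv : lam1 - lam2 < p * (lam1 - μ) * σ / (κ * μ + σ)) :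
    let n2abar : ℝ := (lam2 - μ) * (κ * μ + σ) / (α * (κ * μ + (1 - p) * σ))
    let B : Matrix (Fin 3) (Fin 3) ℝ :=
      !![lam1 - μ - α * n2abar, 0, 0;
         0, lam2 - μ - 2 * α * n2abar, σ;
         p * α * n2abar, 2 * p * α * n2abar, -(κ * μ + σ)]
    ∀ z : ℂ, z ∈ spectrum ℂ (B.map Complex.ofReal) → z.re < 0 := by
  intro n2abar B z hz
  have hK : 0 < κ * μ + σ := by nlinarith
  have hD : 0 < κ * μ + (1 - p) * σ := by nlinarith
  have hinv' : (lam1 - lam2) * (κ * μ + σ) < p * (lam1 - μ) * σ :=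
    (lt_div_iff₀ hK).mp hinv
  -- the key algebraic identity for α * n2abar
  have hnd : α * n2abar * (κ * μ + (1 - p) * σ) = (lam2 - μ) * (κ * μ + σ) := by
    show α * ((lam2 - μ) * (κ * μ + σ) / (α * (κ * μ + (1 - p) * σ))) *
      (κ * μ + (1 - p) * σ) = (lam2 - μ) * (κ * μ + σ)
    rw [mul_div_assoc', div_mul_eq_mul_div, div_eq_iff (mul_ne_zero hα.ne' hD.ne')]
    ring
  have hkey : (lam1 - μ) * (κ * μ + (1 - p) * σ) < (lam2 - μ) * (κ * μ + σ) := by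
    nlinarith [hinv']
  -- the three sign conditions
  have ha : lam1 - μ - α * n2abar < 0 := by nlinarith [hnd, hkey, hD]
  have hn2 : 0 < α * n2abar := by
    nlinarith [hnd, hD, mul_pos (sub_pos.mpr hμlam) hK]
  have hβ : 0 < (κ * μ + σ) + 2 * (α * n2abar) - (lam2 - μ) := by
    nlinarith [hnd, hD, hK, mul_pos hK hD,
      mul_pos (sub_pos.mpr hμlam) (show 0 < (κ * μ + σ) + p * σ by nlinarith)]
  have hγ : 0 < (lam2 - μ) * (κ * μ + σ) := mul_pos (sub_pos.mpr hμlam) hK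
  have hγeq : (lam2 - μ - 2 * (α * n2abar)) * (-(κ * μ + σ)) -
      σ * (2 * (p * (α * n2abar))) = (lam2 - μ) * (κ * μ + σ) := by
    linear_combination 2 * hnd
  -- determinant vanishes
  have hdet : (z • (1 : Matrix (Fin 3) (Fin 3) ℂ) - B.map Complex.ofReal).det = 0 := by
    rw [spectrum.mem_iff, Matrix.isUnit_iff_isUnit_det] at hz
    rw [show (algebraMap ℂ (Matrix (Fin 3) (Fin 3) ℂ)) z = z • 1 by
      simp [Matrix.algebraMap_eq_diagonal, Matrix.smul_one_eq_diagonal]] at hz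
    simpa [isUnit_iff_ne_zero] using hz
  -- factor the determinant
  have hfact : (z • (1 : Matrix (Fin 3) (Fin 3) ℂ) - B.map Complex.ofReal).det =
      (z - ((lam1 - μ - α * n2abar : ℝ) : ℂ)) *
        ((z - ((lam2 - μ - 2 * α * n2abar : ℝ) : ℂ)) * (z + ((κ * μ + σ : ℝ) : ℂ)) -
          ((σ : ℝ) : ℂ) * ((2 * p * α * n2abar : ℝ) : ℂ)) := by
    simp [B, Matrix.det_fin_three, Matrix.map_apply]
    push_cast
    ring
  rw [hfact] at hdet
  rcases mul_eq_zero.mp hdet with h0 | h0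
  · have hz' : z = ((lam1 - μ - α * n2abar : ℝ) : ℂ) := sub_eq_zero.mp h0
    rw [hz']
    simpa using ha
  · -- quadratic case
    refine quad_root_re_neg ((κ * μ + σ) + 2 * (α * n2abar) - (lam2 - μ))
      ((lam2 - μ) * (κ * μ + σ)) hβ hγ z ?_
    have hγc := congrArg (Complex.ofReal) hγeq
    push_cast at hγc h0 ⊢
    linear_combination h0 - hγc
end

section
/- Let 0 < μ < λ2, α > 0, σ > 0, κ ≥ 0 and p ∈ (0,1), and set n̄_{2a} = (λ2 − μ)(κμ + σ)/(α(κμ + (1−p)σ)) and n̄_{2d} = (λ2 − μ)² p (κμ + σ)/(α (κμ + (1−p)σ)²). Let (n_{2a}, n_{2d}) : [0,∞) → [0,∞)² be a solution of the system ṅ_{2a}(t) = n_{2a}(t)(λ2 − μ − α n_{2a}(t)) + σ n_{2d}(t), ṅ_{2d}(t) = pα n_{2a}(t)² − (κμ + σ) n_{2d}(t) with (n_{2a}(0), n_{2d}(0)) ∈ [0,∞)² \ {(0,0)}. Then (n_{2a}(t), n_{2d}(t)) converges to (n̄_{2a}, n̄_{2d}) as t → ∞. -/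
open Filter


private lemma myAntitoneOn {f d : ℝ → ℝ} {a b : ℝ}
    (hd : ∀ t ∈ Set.Icc a b, HasDerivAt f (d t) t)
    (h0 : ∀ t ∈ Set.Ioo a b, d t ≤ 0) : AntitoneOn f (Set.Icc a b) := by
  apply antitoneOn_of_deriv_nonpos (convex_Icc a b)
  · exact fun t ht => (hd t ht).continuousAt.continuousWithinAt
  · intro t ht
    rw [interior_Icc] at ht
    exact ((hd t (Set.Ioo_subset_Icc_self ht)).differentiableAt).differentiableWithinAt
  · intro t ht
    rw [interior_Icc] at ht
    rw [(hd t (Set.Ioo_subset_Icc_self ht)).deriv]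
    exact h0 t ht

private lemma myMonotoneOn {f d : ℝ → ℝ} {a b : ℝ}
    (hd : ∀ t ∈ Set.Icc a b, HasDerivAt f (d t) t)
    (h0 : ∀ t ∈ Set.Ioo a b, 0 ≤ d t) : MonotoneOn f (Set.Icc a b) := by
  apply monotoneOn_of_deriv_nonneg (convex_Icc a b)
  · exact fun t ht => (hd t ht).continuousAt.continuousWithinAt
  · intro t ht
    rw [interior_Icc] at ht
    exact ((hd t (Set.Ioo_subset_Icc_self ht)).differentiableAt).differentiableWithinAt
  · intro t ht
    rw [interior_Icc] at ht
    rw [(hd t (Set.Ioo_subset_Icc_self ht)).deriv]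
    exact h0 t ht

/-- Drift lemma: if whenever `f t ≥ ρ` the derivative is `≤ -m < 0`,
then eventually `f t ≤ ρ`. -/
private lemma eventually_le_of_drift {f d : ℝ → ℝ} {T ρ m : ℝ} (hm : 0 < m)
    (hf : ∀ t ≥ T, HasDerivAt f (d t) t)
    (hdrop : ∀ t ≥ T, ρ ≤ f t → d t ≤ -m) :
    ∀ᶠ t in atTop, f t ≤ ρ := by
  -- no reentry
  have noreentry : ∀ t2 ≥ T, f t2 ≤ ρ → ∀ t ≥ t2, f t ≤ ρ := by
    intro t2 ht2 hft2 t ht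
    by_contra hgt
    push_neg at hgt
    have htt : t2 < t := by
      rcases lt_or_eq_of_le ht with h | h
      · exact h
      · exact absurd hft2 (by rw [h]; exact not_le.2 hgt)
    set S := {s ∈ Set.Icc t2 t | f s ≤ ρ} with hS
    have hSc : IsClosed S := by
      have hcont : ContinuousOn f (Set.Icc t2 t) := fun s hs =>
        (hf s (le_trans ht2 hs.1)).continuousAt.continuousWithinAt
      have : S = Set.Icc t2 t ∩ f ⁻¹' Set.Iic ρ := by
        ext s; simp [hS, Set.mem_sep_iff, and_comm]
      rw [this]
      exact hcont.preimage_isClosed_of_isClosed isClosed_Icc isClosed_Iic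
    have hSne : S.Nonempty := ⟨t2, ⟨le_refl _, le_of_lt htt⟩, hft2⟩
    have hSbdd : BddAbove S := ⟨t, fun s hs => hs.1.2⟩
    set s := sSup S with hs
    have hsS : s ∈ S := hSc.csSup_mem hSne hSbdd
    have hst : s < t := lt_of_le_of_ne hsS.1.2 (fun h => absurd hsS.2 (by rw [h]; exact not_le.2 hgt))
    have habove : ∀ x ∈ Set.Ioc s t, ρ < f x := by
      intro x hx
      by_contra hle
      push_neg at hle
      have : x ∈ S := ⟨⟨le_trans hsS.1.1 hx.1.le, hx.2⟩, hle⟩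
      exact absurd (le_csSup hSbdd this) (not_le.2 hx.1)
    have hanti : AntitoneOn f (Set.Icc s t) := by
      apply myAntitoneOn (fun x hx => hf x (le_trans ht2 (le_trans hsS.1.1 hx.1)))
      intro x hx
      have := hdrop x (le_trans ht2 (le_trans hsS.1.1 hx.1.le))
        (le_of_lt (habove x ⟨hx.1, hx.2.le⟩))
      linarith
    have := hanti ⟨le_refl _, hst.le⟩ ⟨hst.le, le_refl _⟩ hst.le
    exact absurd (le_trans this hsS.2) (not_le.2 hgt)
  -- existence of some point below ρ
  have hexists : ∃ t1 ≥ T, f t1 ≤ ρ := by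
    by_contra hno
    push_neg at hno
    have h1 : ρ < f T := hno T le_rfl
    have hq : 0 < (f T - ρ)/m := div_pos (by linarith) hm
    have htT : T ≤ T + (f T - ρ)/m + 1 := by linarith
    have hanti : AntitoneOn (fun s => f s + m*s) (Set.Icc T (T + (f T - ρ)/m + 1)) := by
      apply myAntitoneOn (d := fun s => d s + m)
      · intro s hs
        have hms : HasDerivAt (fun s : ℝ => m*s) m s := by
          simpa using (hasDerivAt_id s).const_mul m
        exact (hf s hs.1).add hms
      · intro s hs
        have := hdrop s hs.1.le (le_of_lt (hno s hs.1.le))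
        linarith
    have hle := hanti ⟨le_rfl, htT⟩ ⟨htT, le_rfl⟩ htT
    simp only at hle
    have hft : ρ < f (T + (f T - ρ)/m + 1) := hno _ htT
    have hmul : m * (T + (f T - ρ)/m + 1) = m*T + (f T - ρ) + m := by
      field_simp
    nlinarith [hle]
  obtain ⟨t1, ht1, hft1⟩ := hexists
  filter_upwards [eventually_ge_atTop t1] with t ht
  exact noreentry t1 ht1 hft1 t ht

private lemma eventually_ge_of_drift {f d : ℝ → ℝ} {T ρ m : ℝ} (hm : 0 < m)
    (hf : ∀ t ≥ T, HasDerivAt f (d t) t)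
    (hdrop : ∀ t ≥ T, f t ≤ ρ → m ≤ d t) :
    ∀ᶠ t in atTop, ρ ≤ f t := by
  have := eventually_le_of_drift (f := fun t => -f t) (d := fun t => -d t)
    (T := T) (ρ := -ρ) hm (fun t ht => (hf t ht).neg)
    (fun t ht hle => by
      have hle' : -ρ ≤ -f t := hle
      have : m ≤ d t := hdrop t ht (by linarith)
      show -d t ≤ -m
      linarith)
  filter_upwards [this] with t ht
  have ht' : -f t ≤ -ρ := ht
  linarith

/-- Grönwall-type upper bound: if `W' ≤ C - ε W` on `[0,∞)` then `W ≤ max (W 0) (C/ε)`. -/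
private lemma gronwall_ub {W d : ℝ → ℝ} {C ε : ℝ} (hε : 0 < ε)
    (hW : ∀ t ≥ (0:ℝ), HasDerivAt W (d t) t)
    (hle : ∀ t ≥ (0:ℝ), d t ≤ C - ε * W t) :
    ∀ t ≥ (0:ℝ), W t ≤ max (W 0) (C/ε) := by
  intro t ht
  have hanti : AntitoneOn (fun s => (W s - C/ε) * Real.exp (ε*s)) (Set.Icc 0 t) := by
    apply myAntitoneOn
      (d := fun s => d s * Real.exp (ε*s) + (W s - C/ε) * (Real.exp (ε*s) * ε))
    · intro s hs
      have he : HasDerivAt (fun s : ℝ => Real.exp (ε*s)) (Real.exp (ε*s) * ε) s := by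
        have : HasDerivAt (fun s : ℝ => ε*s) ε s := by
          simpa using (hasDerivAt_id s).const_mul ε
        exact this.exp
      exact ((hW s hs.1).sub_const (C/ε)).mul he
    · intro s hs
      have h1 := hle s hs.1.le
      have h2 : Real.exp (ε*s) > 0 := Real.exp_pos _
      have : d s + ε * W s - C ≤ 0 := by linarith
      have hcε : ε * (C/ε) = C := by field_simp
      nlinarith [mul_le_mul_of_nonneg_right this h2.le]
  have hg := hanti ⟨le_rfl, ht⟩ ⟨ht, le_rfl⟩ ht
  simp only [mul_zero, Real.exp_zero, mul_one] at hg
  rcases le_or_gt (W t) (C/ε) with h | h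
  · exact le_trans h (le_max_right _ _)
  · have h2 : (1:ℝ) ≤ Real.exp (ε*t) := by
      rw [← Real.exp_zero]
      exact Real.exp_le_exp.2 (by positivity)
    have h3 : W t - C/ε ≤ (W t - C/ε) * Real.exp (ε*t) := by
      nlinarith
    have : W t ≤ W 0 := by nlinarith
    exact le_trans this (le_max_left _ _)

/-- Positivity persistence: if `u' ≥ -K u` and `u t0 > 0` then `u > 0` afterwards. -/
private lemma pos_persist {u d : ℝ → ℝ} {t0 K : ℝ}
    (hu : ∀ t ≥ t0, HasDerivAt u (d t) t)
    (hge : ∀ t ≥ t0, -K * u t ≤ d t)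
    (h0 : 0 < u t0) : ∀ t ≥ t0, 0 < u t := by
  intro t ht
  have hmono : MonotoneOn (fun s => u s * Real.exp (K*s)) (Set.Icc t0 t) := by
    apply myMonotoneOn (d := fun s => d s * Real.exp (K*s) + u s * (Real.exp (K*s) * K))
    · intro s hs
      have he : HasDerivAt (fun s : ℝ => Real.exp (K*s)) (Real.exp (K*s) * K) s := by
        have : HasDerivAt (fun s : ℝ => K*s) K s := by
          simpa using (hasDerivAt_id s).const_mul K
        exact this.exp
      exact (hu s hs.1).mul he
    · intro s hs
      have h1 := hge s hs.1.le
      have h2 : Real.exp (K*s) > 0 := Real.exp_pos _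
      nlinarith [mul_le_mul_of_nonneg_right h1 h2.le]
  have := hmono ⟨le_rfl, ht⟩ ⟨ht, le_rfl⟩ ht
  simp only at this
  have h2 : 0 < u t0 * Real.exp (K*t0) := by positivity
  have h3 : Real.exp (K*t) > 0 := Real.exp_pos _
  nlinarith

set_option maxHeartbeats 4000000 in
/-- Every nonnegative solution of the two-dimensional mutant ODE system
whose initial condition is not `(0,0)` converges to the unique coordinatewise positive
equilibrium `(n̄2a, n̄2d)` as `t → ∞`. -/
theorem two_dim_mutant_system_global_convergence
    (lam2 μ α σ κ p : ℝ)
    (hμ : 0 < μ) (hμlam : μ < lam2) (hα : 0 < α) (hσ : 0 < σ)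
    (hκ : 0 ≤ κ) (hp0 : 0 < p) (hp1 : p < 1)
    (n2a n2d : ℝ → ℝ)
    (hderiva : ∀ t ≥ (0 : ℝ),
      HasDerivAt n2a (n2a t * (lam2 - μ - α * n2a t) + σ * n2d t) t)
    (hderivd : ∀ t ≥ (0 : ℝ),
      HasDerivAt n2d (p * α * (n2a t) ^ 2 - (κ * μ + σ) * n2d t) t)
    (hnonneg : ∀ t ≥ (0 : ℝ), 0 ≤ n2a t ∧ 0 ≤ n2d t)
    (hinit : (n2a 0, n2d 0) ≠ (0, 0)) :
    Tendsto (fun t => (n2a t, n2d t)) atTop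
      (nhds ((lam2 - μ) * (κ * μ + σ) / (α * (κ * μ + (1 - p) * σ)),
        (lam2 - μ) ^ 2 * p * (κ * μ + σ) / (α * (κ * μ + (1 - p) * σ) ^ 2))) := by
  have hlpos : 0 < lam2 - μ := by linarith
  have hc : 0 < κ * μ + σ := by positivity
  have hcp : σ * p < κ * μ + σ := by nlinarith
  set X : ℝ := (lam2 - μ) * (κ * μ + σ) / (α * (κ * μ + (1 - p) * σ)) with hX_def
  set Y : ℝ := (lam2 - μ) ^ 2 * p * (κ * μ + σ) / (α * (κ * μ + (1 - p) * σ) ^ 2) with hY_def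
  have hden : (0:ℝ) < κ * μ + (1 - p) * σ := by nlinarith
  have hXval : α * ((κ * μ + σ) - σ * p) * X = (lam2 - μ) * (κ * μ + σ) := by
    rw [hX_def]
    have h1 : κ * μ + σ - σ * p = κ * μ + (1 - p) * σ := by ring
    rw [h1]
    field_simp
  have hXpos : 0 < X := by
    rw [hX_def]
    positivity
  have hYval : Y * (κ * μ + σ) = p * α * X ^ 2 := by
    rw [hY_def, hX_def]
    field_simp
  clear_value X Y
  set du : ℝ → ℝ := fun t => n2a t * (lam2 - μ - α * n2a t) + σ * n2d t with hdu_def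
  set dv : ℝ → ℝ := fun t => p * α * (n2a t) ^ 2 - (κ * μ + σ) * n2d t with hdv_def
  have hdu_eq : ∀ t, du t = n2a t * (lam2 - μ - α * n2a t) + σ * n2d t := fun t => rfl
  have hdv_eq : ∀ t, dv t = p * α * (n2a t) ^ 2 - (κ * μ + σ) * n2d t := fun t => rfl
  have hdua : ∀ t ≥ (0:ℝ), HasDerivAt n2a (du t) t := hderiva
  have hdvd : ∀ t ≥ (0:ℝ), HasDerivAt n2d (dv t) t := hderivd
  clear_value du dv
  -- Step A : boundedness
  set β : ℝ := (σ/(κ * μ + σ) + 1/p)/2 with hβ_def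
  have hβpos : 0 < β := by positivity
  have hβcp : σ/(κ * μ + σ) < 1/p := by
    rw [div_lt_div_iff₀ hc hp0]
    nlinarith
  have hβ1 : σ < β * (κ * μ + σ) := by
    have h1 : σ/(κ * μ + σ) < β := by rw [hβ_def]; linarith
    calc σ = (σ/(κ * μ + σ)) * (κ * μ + σ) := by field_simp
    _ < β * (κ * μ + σ) := mul_lt_mul_of_pos_right h1 hc
  have hβ2 : β * p < 1 := by
    have h1 : β < 1/p := by rw [hβ_def]; linarith
    calc β * p < (1/p) * p := mul_lt_mul_of_pos_right h1 hp0
    _ = 1 := by field_simp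
  set ε0 : ℝ := (β * (κ * μ + σ) - σ)/β with hε0_def
  have hε0 : 0 < ε0 := div_pos (by linarith) hβpos
  have hσβε : σ - β * (κ * μ + σ) + ε0 * β = 0 := by
    rw [hε0_def]
    field_simp
    ring
  have haq : 0 < α * (1 - β * p) := by nlinarith
  set C0 : ℝ := ((lam2 - μ) + ε0)^2/(4*(α * (1 - β * p))) with hC0_def
  have hC0' : 4*(α * (1 - β * p))*C0 = ((lam2 - μ) + ε0)^2 := by
    rw [hC0_def]
    field_simp
    exact div_self (sub_pos.2 hβ2).ne'
  set W : ℝ → ℝ := fun t => n2a t + β * n2d t with hW_def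
  have hW_eq : ∀ t, W t = n2a t + β * n2d t := fun t => rfl
  have hWderiv : ∀ t ≥ (0:ℝ), HasDerivAt W (du t + β * dv t) t :=
    fun t ht => (hdua t ht).add ((hdvd t ht).const_mul β)
  clear_value W
  clear_value β ε0 C0
  have hWle : ∀ t ≥ (0:ℝ), du t + β * dv t ≤ C0 - ε0 * W t := by
    intro t ht
    obtain ⟨hu0, hv0⟩ := hnonneg t ht
    have hkey : du t + β * dv t + ε0 * W t - C0 =
        ((lam2 - μ) + ε0) * n2a t - (α * (1 - β * p)) * (n2a t)^2 - C0 := by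
      rw [hdu_eq, hdv_eq, hW_eq]
      linear_combination n2d t * hσβε
    nlinarith [sq_nonneg (2*(α * (1 - β * p))*n2a t - ((lam2 - μ) + ε0)), haq, hC0', hkey]
  have hMbound := gronwall_ub hε0 hWderiv hWle
  set M0 : ℝ := max (W 0) (C0/ε0) with hM0_def
  clear_value M0
  have hMu : ∀ t ≥ (0:ℝ), n2a t ≤ M0 := by
    intro t ht
    have h1 := hMbound t ht
    have h2 := (hnonneg t ht).2
    rw [hW_eq] at h1
    nlinarith
  have hMv : ∀ t ≥ (0:ℝ), n2d t ≤ M0/β := by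
    intro t ht
    have h1 := hMbound t ht
    have h2 := (hnonneg t ht).1
    rw [hW_eq] at h1
    rw [le_div_iff₀ hβpos]
    nlinarith
  -- Step B : a positive point for n2a
  have hB : ∃ t0 ≥ (0:ℝ), 0 < n2a t0 := by
    rcases lt_or_eq_of_le (hnonneg 0 le_rfl).1 with h | h
    · exact ⟨0, le_rfl, h⟩
    · -- n2a 0 = 0, so n2d 0 > 0 and the derivative of n2a at 0 is positive
      have hv0 : 0 < n2d 0 := by
        rcases lt_or_eq_of_le (hnonneg 0 le_rfl).2 with h' | h'
        · exact h'
        · exact absurd (Prod.ext (h.symm) (h'.symm)) hinit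
      have hd0 : HasDerivAt n2a (σ * n2d 0) 0 := by
        have := hdua 0 le_rfl
        rw [hdu_eq, ← h] at this
        simpa using this
      have hslope := hasDerivAt_iff_tendsto_slope.1 hd0
      have hpos : 0 < σ * n2d 0 := by positivity
      have hev : ∀ᶠ x in nhdsWithin 0 {(0:ℝ)}ᶜ, 0 < slope n2a 0 x :=
        hslope.eventually (lt_mem_nhds hpos)
      have hev2 : ∀ᶠ x in nhdsWithin 0 (Set.Ioi (0:ℝ)), 0 < slope n2a 0 x :=
        hev.filter_mono (nhdsWithin_mono 0 (fun x hx => ne_of_gt hx))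
      obtain ⟨x, hx1, hx2⟩ := (hev2.and self_mem_nhdsWithin).exists
      rw [slope_def_field, ← h] at hx1
      have hx2' : 0 < x := hx2
      refine ⟨x, hx2'.le, ?_⟩
      have : 0 < n2a x / x := by
        have : (n2a x - 0) / (x - 0) = n2a x / x := by ring_nf
        rw [this] at hx1
        exact hx1
      have := mul_pos this hx2'
      rw [div_mul_cancel₀] at this
      · exact this
      · exact ne_of_gt hx2'
  obtain ⟨t0, ht0, hut0⟩ := hB
  -- Step C : positivity forever after
  have hup : ∀ t ≥ t0, 0 < n2a t := by
    apply pos_persist (d := du) (K := α * M0) (fun t ht => hdua t (le_trans ht0 ht)) _ hut0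
    intro t ht
    have h0 := le_trans ht0 ht
    obtain ⟨hu0, hv0⟩ := hnonneg t h0
    have hM := hMu t h0
    rw [hdu_eq]
    nlinarith [mul_nonneg hu0 hlpos.le, mul_nonneg (mul_nonneg hα.le hu0) (sub_nonneg.2 hM),
      mul_nonneg hσ.le hv0]
  -- Step D : persistence
  have hηpos : 0 < (lam2 - μ)/(2*α) := by positivity
  have hηev : ∀ᶠ t in atTop, (lam2 - μ)/(2*α) ≤ n2a t := by
    have hlog := eventually_ge_of_drift (f := fun t => Real.log (n2a t))
      (d := fun t => du t / n2a t) (T := t0) (ρ := Real.log ((lam2 - μ)/(2*α)))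
      (m := (lam2 - μ)/2) (by positivity)
      (fun t ht => ((hdua t (le_trans ht0 ht)).log (ne_of_gt (hup t ht))))
      ?_
    · filter_upwards [hlog, eventually_ge_atTop t0] with t hlt htt
      exact (Real.log_le_log_iff hηpos (hup t htt)).1 hlt
    · intro t ht hle
      have hupos := hup t ht
      have hule : n2a t ≤ (lam2 - μ)/(2*α) := (Real.log_le_log_iff hupos hηpos).1 hle
      have hv0 := (hnonneg t (le_trans ht0 ht)).2
      rw [le_div_iff₀ hupos, hdu_eq]
      have hαu : α * n2a t ≤ (lam2 - μ)/2 := by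
        calc α * n2a t ≤ α * ((lam2 - μ)/(2*α)) := mul_le_mul_of_nonneg_left hule hα.le
        _ = (lam2 - μ)/2 := by field_simp
      nlinarith [mul_nonneg hσ.le hv0]
  -- eventual bounds and filter setup
  have hev_u_ub : ∀ᶠ t in atTop, n2a t ≤ M0 := by
    filter_upwards [eventually_ge_atTop (0:ℝ)] with t ht using hMu t ht
  have hev_u_lb : ∀ᶠ t in atTop, (0:ℝ) ≤ n2a t := by
    filter_upwards [eventually_ge_atTop (0:ℝ)] with t ht using (hnonneg t ht).1
  have hev_v_ub : ∀ᶠ t in atTop, n2d t ≤ M0/β := by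
    filter_upwards [eventually_ge_atTop (0:ℝ)] with t ht using hMv t ht
  have hev_v_lb : ∀ᶠ t in atTop, (0:ℝ) ≤ n2d t := by
    filter_upwards [eventually_ge_atTop (0:ℝ)] with t ht using (hnonneg t ht).2
  have hbu_le : IsBoundedUnder (· ≤ ·) atTop n2a := isBoundedUnder_of_eventually_le hev_u_ub
  have hbu_ge : IsBoundedUnder (· ≥ ·) atTop n2a := isBoundedUnder_of_eventually_ge hev_u_lb
  have hbv_le : IsBoundedUnder (· ≤ ·) atTop n2d := isBoundedUnder_of_eventually_le hev_v_ub
  have hbv_ge : IsBoundedUnder (· ≥ ·) atTop n2d := isBoundedUnder_of_eventually_ge hev_v_lb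
  have hcu_le : IsCoboundedUnder (· ≤ ·) atTop n2a := hbu_ge.isCoboundedUnder_le
  have hcu_ge : IsCoboundedUnder (· ≥ ·) atTop n2a := hbu_le.isCoboundedUnder_ge
  have hcv_le : IsCoboundedUnder (· ≤ ·) atTop n2d := hbv_ge.isCoboundedUnder_le
  have hcv_ge : IsCoboundedUnder (· ≥ ·) atTop n2d := hbv_le.isCoboundedUnder_ge
  set A : ℝ := limsup n2a atTop with hA_def
  set aL : ℝ := liminf n2a atTop with haL_def
  set B : ℝ := limsup n2d atTop with hB_def
  set bL : ℝ := liminf n2d atTop with hbL_def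
  have hηa : (lam2 - μ)/(2*α) ≤ aL := le_liminf_of_le hcu_ge hηev
  have haA : aL ≤ A := liminf_le_limsup hbu_le hbu_ge
  have hbB : bL ≤ B := liminf_le_limsup hbv_le hbv_ge
  have hb0 : 0 ≤ bL := le_liminf_of_le hcv_ge hev_v_lb
  have hB0 : 0 ≤ B := le_trans hb0 hbB
  have hA0 : 0 < A := lt_of_lt_of_le hηpos (le_trans hηa haA)
  have haL0 : 0 < aL := lt_of_lt_of_le hηpos hηa
  clear_value A aL B bL
  clear hMbound
  clear hderiva hderivd hβcp hβ1 hβ2 haq hσβε hC0' hWderiv hWle hMu hMv hup hut0 hηev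
  clear hβ_def hε0_def hC0_def hW_def hW_eq hM0_def hX_def hY_def hdu_def hdv_def hε0 ht0
  -- E1 : B ≤ p α A² / c
  have hE1 : B ≤ p * α * A^2 / (κ * μ + σ) := by
    have key : ∀ δ > (0:ℝ), B ≤ p * α * (A + δ)^2 / (κ * μ + σ) + δ := by
      intro δ hδ
      have hevU : ∀ᶠ t in atTop, n2a t < A + δ := by
        apply eventually_lt_of_limsup_lt _ hbu_le
        rw [← hA_def]; linarith
      obtain ⟨T1, hT1⟩ := eventually_atTop.1 (hevU.and (eventually_ge_atTop (0:ℝ)))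
      have hdrift := eventually_le_of_drift (f := n2d) (d := dv) (T := T1)
        (ρ := p * α * (A + δ)^2 / (κ * μ + σ) + δ) (m := (κ * μ + σ) * δ)
        (by positivity)
        (fun t ht => hdvd t (hT1 t ht).2) ?_
      · rw [hB_def]; exact limsup_le_of_le hcv_le hdrift
      · intro t ht hρ
        obtain ⟨hUt, ht0'⟩ := hT1 t ht
        have hu0 := (hnonneg t ht0').1
        rw [hdv_eq]
        have hsq : (n2a t)^2 ≤ (A + δ)^2 := pow_le_pow_left₀ hu0 hUt.le 2
        have h1 : (κ * μ + σ) * (p * α * (A + δ)^2 / (κ * μ + σ) + δ) ≤ (κ * μ + σ) * n2d t :=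
          mul_le_mul_of_nonneg_left hρ hc.le
        have h2 : p * α * (n2a t)^2 ≤ p * α * (A + δ)^2 :=
          mul_le_mul_of_nonneg_left hsq (by positivity)
        have h3 : (κ * μ + σ) * (p * α * (A + δ)^2 / (κ * μ + σ) + δ)
            = p * α * (A + δ)^2 + (κ * μ + σ) * δ := by
          field_simp
        linarith
    apply le_of_forall_pos_le_add
    intro ε hε
    have hC1 : (0:ℝ) < p * α * (2*A+1) / (κ * μ + σ) + 1 := by positivity
    set C1 : ℝ := p * α * (2*A+1) / (κ * μ + σ) + 1 with hC1_def
    set δ : ℝ := min 1 (ε / C1) with hδ_def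
    have hδ : 0 < δ := lt_min one_pos (div_pos hε hC1)
    have hδ1 : δ ≤ 1 := min_le_left _ _
    have hδ2 : δ ≤ ε / C1 := min_le_right _ _
    have h1 := key δ hδ
    clear_value δ C1
    have hnum : p * α * (2*A*δ + δ^2) ≤ δ * (p * α * (2*A+1)) := by
      have hint : 0 ≤ p * α * (δ * (1 - δ)) :=
        mul_nonneg (mul_nonneg hp0.le hα.le) (mul_nonneg hδ.le (by linarith))
      linarith [hint]
    have hdiv : p * α * (2*A*δ + δ^2) / (κ * μ + σ) ≤ δ * (p * α * (2*A+1)) / (κ * μ + σ) := by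
      gcongr
    have hfin : δ * (p * α * (2*A+1)) / (κ * μ + σ) + δ = δ * C1 := by
      rw [hC1_def]
      field_simp
    have hδC1 : δ * C1 ≤ ε := by
      have := (le_div_iff₀ hC1).1 hδ2
      linarith
    have expand : p * α * (A + δ)^2 / (κ * μ + σ)
        = p * α * A^2/(κ * μ + σ) + p * α * (2*A*δ + δ^2)/(κ * μ + σ) := by
      field_simp
      ring
    linarith
  -- E2 : p α aL² / c ≤ bL
  have hE2 : p * α * aL^2 / (κ * μ + σ) ≤ bL := by
    have key : ∀ δ, 0 < δ → δ ≤ aL → p * α * (aL - δ)^2 / (κ * μ + σ) - δ ≤ bL := by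
      intro δ hδ hδaL
      have hevL : ∀ᶠ t in atTop, aL - δ < n2a t := by
        apply eventually_lt_of_lt_liminf _ hbu_ge
        rw [← haL_def]; linarith
      obtain ⟨T1, hT1⟩ := eventually_atTop.1 (hevL.and (eventually_ge_atTop (0:ℝ)))
      have hdrift := eventually_ge_of_drift (f := n2d) (d := dv) (T := T1)
        (ρ := p * α * (aL - δ)^2 / (κ * μ + σ) - δ) (m := (κ * μ + σ) * δ)
        (by positivity)
        (fun t ht => hdvd t (hT1 t ht).2) ?_
      · rw [hbL_def]; exact le_liminf_of_le hcv_ge hdrift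
      · intro t ht hρ
        obtain ⟨hLt, ht0'⟩ := hT1 t ht
        have hu0 := (hnonneg t ht0').1
        rw [hdv_eq]
        have hsq : (aL - δ)^2 ≤ (n2a t)^2 := pow_le_pow_left₀ (by linarith) hLt.le 2
        have h1 : (κ * μ + σ) * n2d t ≤ (κ * μ + σ) * (p * α * (aL - δ)^2 / (κ * μ + σ) - δ) :=
          mul_le_mul_of_nonneg_left hρ hc.le
        have h2 : p * α * (aL - δ)^2 ≤ p * α * (n2a t)^2 :=
          mul_le_mul_of_nonneg_left hsq (by positivity)
        have h3 : (κ * μ + σ) * (p * α * (aL - δ)^2 / (κ * μ + σ) - δ)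
            = p * α * (aL - δ)^2 - (κ * μ + σ) * δ := by
          field_simp
        linarith
    apply le_of_forall_pos_le_add
    intro ε hε
    have hC2 : (0:ℝ) < p * α * (2*aL) / (κ * μ + σ) + 1 := by positivity
    set C2 : ℝ := p * α * (2*aL) / (κ * μ + σ) + 1 with hC2_def
    set δ : ℝ := min aL (ε / C2) with hδ_def
    have hδ : 0 < δ := lt_min haL0 (div_pos hε hC2)
    have hδ1 : δ ≤ aL := min_le_left _ _
    have hδ2 : δ ≤ ε / C2 := min_le_right _ _
    have h1 := key δ hδ hδ1
    clear_value δ C2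
    have hnum : p * α * (2*aL*δ - δ^2) ≤ δ * (p * α * (2*aL)) := by
      linarith [mul_nonneg (mul_nonneg hp0.le hα.le) (sq_nonneg δ)]
    have hdiv : p * α * (2*aL*δ - δ^2) / (κ * μ + σ) ≤ δ * (p * α * (2*aL)) / (κ * μ + σ) := by
      gcongr
    have hfin : δ * (p * α * (2*aL)) / (κ * μ + σ) + δ = δ * C2 := by
      rw [hC2_def]
      field_simp
    have hδC2 : δ * C2 ≤ ε := by
      have := (le_div_iff₀ hC2).1 hδ2
      linarith
    have expand : p * α * aL^2 / (κ * μ + σ)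
        = p * α * (aL - δ)^2/(κ * μ + σ) + p * α * (2*aL*δ - δ^2)/(κ * μ + σ) := by
      field_simp
      ring
    linarith
  -- E3
  have hE3 : 0 ≤ (lam2 - μ) * A - α * A^2 + σ * B := by
    by_contra hneg
    push_neg at hneg
    have hE : 0 < -((lam2 - μ) * A - α * A^2 + σ * B) := by linarith
    set E : ℝ := -((lam2 - μ) * A - α * A^2 + σ * B) with hE_def
    clear_value E
    set B' : ℝ := B + E/(2*σ) with hB'_def
    have hEσ : 0 < E/(2*σ) := by positivity
    have hB'pos : 0 < B' := by rw [hB'_def]; linarith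
    have hBB' : B < B' := by rw [hB'_def]; linarith
    clear_value B'
    have hevB' : ∀ᶠ t in atTop, n2d t < B' := by
      apply eventually_lt_of_limsup_lt _ hbv_le
      rw [← hB_def]; exact hBB'
    have hQA : -α * A^2 + (lam2 - μ) * A + σ * B' < 0 := by
      have h1 : σ * (E/(2*σ)) = E/2 := by field_simp
      have h2 : σ * B' = σ * B + σ * (E/(2*σ)) := by rw [hB'_def]; ring
      linarith [h1, h2, hE, hE_def]
    have hvertA : (lam2 - μ)/(2*α) < A := by
      rcases lt_or_eq_of_le (le_trans hηa haA) with h | h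
      · exact h
      · exfalso
        rw [← h] at hQA
        have h3 : -α * ((lam2 - μ)/(2*α))^2 + (lam2 - μ) * ((lam2 - μ)/(2*α))
            = (lam2 - μ)^2/(4*α) := by field_simp; ring
        linarith [mul_pos hσ hB'pos, h3, hQA,
          div_pos (pow_pos hlpos 2) (by positivity : (0:ℝ) < 4*α)]
    have hopen : IsOpen {x : ℝ | -α * x^2 + (lam2 - μ) * x + σ * B' < 0} := by
      apply isOpen_lt _ continuous_const
      continuity
    obtain ⟨δ₂, hδ₂, hball⟩ := Metric.isOpen_iff.1 hopen A hQA
    set ρ : ℝ := max ((A + (lam2 - μ)/(2*α))/2) (A - δ₂/2) with hρ_def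
    have hρA : ρ < A := by
      rw [hρ_def]
      apply max_lt
      · linarith
      · linarith
    have hρvert : (lam2 - μ)/(2*α) < ρ := by
      have h1 : (lam2 - μ)/(2*α) < (A + (lam2 - μ)/(2*α))/2 := by linarith
      exact lt_of_lt_of_le h1 (by rw [hρ_def]; exact le_max_left _ _)
    have hρball : ρ ∈ Metric.ball A δ₂ := by
      rw [Metric.mem_ball, Real.dist_eq, abs_sub_lt_iff]
      constructor
      · linarith
      · have h1 : A - δ₂/2 ≤ ρ := by rw [hρ_def]; exact le_max_right _ _
        linarith
    have hQρ : -α * ρ^2 + (lam2 - μ) * ρ + σ * B' < 0 := hball hρball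
    clear_value ρ
    obtain ⟨T1, hT1⟩ := eventually_atTop.1 (hevB'.and (eventually_ge_atTop (0:ℝ)))
    have hvert' : (lam2 - μ) < 2 * α * ρ := by
      have h := mul_lt_mul_of_pos_left hρvert (by positivity : (0:ℝ) < 2*α)
      have h2 : 2*α*((lam2 - μ)/(2*α)) = lam2 - μ := by field_simp
      linarith
    have hdrift := eventually_le_of_drift (f := n2a) (d := du) (T := T1) (ρ := ρ)
      (m := -(-α * ρ^2 + (lam2 - μ) * ρ + σ * B')) (by linarith)
      (fun t ht => hdua t (hT1 t ht).2) ?_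
    · have hle := limsup_le_of_le hcu_le hdrift
      rw [← hA_def] at hle
      linarith
    · intro t ht hρle
      obtain ⟨hB't, ht0'⟩ := hT1 t ht
      have hv0 := (hnonneg t ht0').2
      have hu0 := (hnonneg t ht0').1
      rw [hdu_eq]
      have h1 : σ * n2d t ≤ σ * B' := mul_le_mul_of_nonneg_left hB't.le hσ.le
      have hαin : 0 ≤ α * (n2a t + ρ) - (lam2 - μ) := by
        have := mul_le_mul_of_nonneg_left hρle hα.le
        linarith
      have hprod : 0 ≤ (n2a t - ρ) * (α * (n2a t + ρ) - (lam2 - μ)) :=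
        mul_nonneg (by linarith) hαin
      have h2 : -α * (n2a t)^2 + (lam2 - μ) * n2a t ≤ -α * ρ^2 + (lam2 - μ) * ρ := by
        linarith [hprod]
      linarith [h1, h2]
  -- E4
  have hE4 : (lam2 - μ) * aL - α * aL^2 + σ * bL ≤ 0 := by
    by_contra hneg
    push_neg at hneg
    have hbLpos : 0 < bL := by
      have h1 : (0:ℝ) < p * α * aL^2 / (κ * μ + σ) := by positivity
      linarith [hE2]
    have hE : 0 < (lam2 - μ) * aL - α * aL^2 + σ * bL := hneg
    set δ : ℝ := min (((lam2 - μ) * aL - α * aL^2 + σ * bL)/(2*σ)) (bL/2) with hδ_def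
    have hδpos : 0 < δ := lt_min (by positivity) (by positivity)
    have hδ1 : δ ≤ ((lam2 - μ) * aL - α * aL^2 + σ * bL)/(2*σ) := min_le_left _ _
    have hδ2 : δ ≤ bL/2 := min_le_right _ _
    clear_value δ
    set b' : ℝ := bL - δ with hb'_def
    have hb'pos : 0 < b' := by rw [hb'_def]; linarith
    have hb'lt : b' < bL := by rw [hb'_def]; linarith
    clear_value b'
    have hevb' : ∀ᶠ t in atTop, b' < n2d t := by
      apply eventually_lt_of_lt_liminf _ hbv_ge
      rw [← hbL_def]; exact hb'lt
    have hQa : 0 < -α * aL^2 + (lam2 - μ) * aL + σ * b' := by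
      have h1 : σ * δ ≤ σ * (((lam2 - μ) * aL - α * aL^2 + σ * bL)/(2*σ)) :=
        mul_le_mul_of_nonneg_left hδ1 hσ.le
      have h2 : σ * (((lam2 - μ) * aL - α * aL^2 + σ * bL)/(2*σ))
          = ((lam2 - μ) * aL - α * aL^2 + σ * bL)/2 := by field_simp
      have h3 : σ * b' = σ * bL - σ * δ := by rw [hb'_def]; ring
      linarith
    have hopen : IsOpen {x : ℝ | 0 < -α * x^2 + (lam2 - μ) * x + σ * b'} := by
      apply isOpen_lt continuous_const
      continuity
    obtain ⟨δ₂, hδ₂, hball⟩ := Metric.isOpen_iff.1 hopen aL hQa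
    have hρball : aL + δ₂/2 ∈ Metric.ball aL δ₂ := by
      rw [Metric.mem_ball, Real.dist_eq, abs_sub_lt_iff]
      constructor
      · linarith
      · linarith
    have hQρ : 0 < -α * (aL + δ₂/2)^2 + (lam2 - μ) * (aL + δ₂/2) + σ * b' := hball hρball
    set ρ : ℝ := aL + δ₂/2 with hρ_def
    have hρaL : aL < ρ := by rw [hρ_def]; linarith
    have hρpos : 0 < ρ := by linarith
    clear_value ρ
    have hm : 0 < min (σ * b') (-α * ρ^2 + (lam2 - μ) * ρ + σ * b') :=
      lt_min (mul_pos hσ hb'pos) hQρ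
    obtain ⟨T1, hT1⟩ := eventually_atTop.1 (hevb'.and (eventually_ge_atTop (0:ℝ)))
    have hdrift := eventually_ge_of_drift (f := n2a) (d := du) (T := T1) (ρ := ρ)
      (m := min (σ * b') (-α * ρ^2 + (lam2 - μ) * ρ + σ * b')) hm
      (fun t ht => hdua t (hT1 t ht).2) ?_
    · have hge := le_liminf_of_le hcu_ge hdrift
      rw [← haL_def] at hge
      linarith
    · intro t ht hule
      obtain ⟨hb't, ht0'⟩ := hT1 t ht
      have hu0 := (hnonneg t ht0').1
      rw [hdu_eq]
      have h4 : σ * b' ≤ σ * n2d t := mul_le_mul_of_nonneg_left hb't.le hσ.le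
      have hmle1 : min (σ * b') (-α * ρ^2 + (lam2 - μ) * ρ + σ * b') ≤ σ * b' := min_le_left _ _
      have hmle2 : min (σ * b') (-α * ρ^2 + (lam2 - μ) * ρ + σ * b')
          ≤ -α * ρ^2 + (lam2 - μ) * ρ + σ * b' := min_le_right _ _
      set m : ℝ := min (σ * b') (-α * ρ^2 + (lam2 - μ) * ρ + σ * b') with hm_def
      clear_value m
      have hh1 : 0 ≤ (ρ - n2a t) * (σ * b' - m) :=
        mul_nonneg (by linarith) (by linarith)
      have hh2 : 0 ≤ n2a t * ((-α * ρ^2 + (lam2 - μ) * ρ + σ * b') - m) :=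
        mul_nonneg hu0 (by linarith)
      have hh3 : 0 ≤ α * ρ * n2a t * (ρ - n2a t) :=
        mul_nonneg (mul_nonneg (mul_nonneg hα.le hρpos.le) hu0) (by linarith)
      have h5 : ρ * m ≤ ρ * (-α * (n2a t)^2 + (lam2 - μ) * n2a t + σ * b') := by
        linarith [hh1, hh2, hh3]
      have h6 : m ≤ -α * (n2a t)^2 + (lam2 - μ) * n2a t + σ * b' :=
        le_of_mul_le_mul_left h5 hρpos
      linarith [h4, h6]
  -- conclusion
  have hAX : A ≤ X := by
    have h2 : σ * B ≤ σ * (p * α * A^2 / (κ * μ + σ)) := mul_le_mul_of_nonneg_left hE1 hσ.le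
    have h3 : 0 ≤ (lam2 - μ) * A - α * A^2 + σ * (p * α * A^2 / (κ * μ + σ)) := by linarith
    have h6 : 0 ≤ (lam2 - μ) * A * (κ * μ + σ) - α * A^2 * (κ * μ + σ) + σ * (p * α * A^2) := by
      have h4 := mul_le_mul_of_nonneg_right h3 hc.le
      calc (0:ℝ) = 0 * (κ * μ + σ) := by ring
      _ ≤ ((lam2 - μ) * A - α * A^2 + σ * (p * α * A^2 / (κ * μ + σ))) * (κ * μ + σ) := h4
      _ = (lam2 - μ) * A * (κ * μ + σ) - α * A^2 * (κ * μ + σ) + σ * (p * α * A^2) := by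
          field_simp
    have hpos : 0 < A * (α * ((κ * μ + σ) - σ * p)) :=
      mul_pos hA0 (mul_pos hα (by linarith))
    have h7 : A * (α * ((κ * μ + σ) - σ * p)) * A ≤ A * (α * ((κ * μ + σ) - σ * p)) * X := by
      calc A * (α * ((κ * μ + σ) - σ * p)) * A
          = α * A^2 * (κ * μ + σ) - σ * (p * α * A^2) := by ring
      _ ≤ (lam2 - μ) * A * (κ * μ + σ) := by linarith
      _ = A * ((lam2 - μ) * (κ * μ + σ)) := by ring
      _ = A * (α * ((κ * μ + σ) - σ * p) * X) := by rw [hXval]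
      _ = A * (α * ((κ * μ + σ) - σ * p)) * X := by ring
    exact le_of_mul_le_mul_left (by linarith [h7]) hpos
  have hXa : X ≤ aL := by
    have h2 : σ * (p * α * aL^2 / (κ * μ + σ)) ≤ σ * bL := mul_le_mul_of_nonneg_left hE2 hσ.le
    have h3 : (lam2 - μ) * aL - α * aL^2 + σ * (p * α * aL^2 / (κ * μ + σ)) ≤ 0 := by linarith
    have h6 : (lam2 - μ) * aL * (κ * μ + σ) - α * aL^2 * (κ * μ + σ) + σ * (p * α * aL^2) ≤ 0 := by
      have h4 := mul_le_mul_of_nonneg_right h3 hc.le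
      calc (lam2 - μ) * aL * (κ * μ + σ) - α * aL^2 * (κ * μ + σ) + σ * (p * α * aL^2)
          = ((lam2 - μ) * aL - α * aL^2 + σ * (p * α * aL^2 / (κ * μ + σ))) * (κ * μ + σ) := by
            field_simp
      _ ≤ 0 * (κ * μ + σ) := h4
      _ = 0 := by ring
    have hpos : 0 < aL * (α * ((κ * μ + σ) - σ * p)) :=
      mul_pos haL0 (mul_pos hα (by linarith))
    have h7 : aL * (α * ((κ * μ + σ) - σ * p)) * X ≤ aL * (α * ((κ * μ + σ) - σ * p)) * aL := by
      calc aL * (α * ((κ * μ + σ) - σ * p)) * X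
          = aL * (α * ((κ * μ + σ) - σ * p) * X) := by ring
      _ = aL * ((lam2 - μ) * (κ * μ + σ)) := by rw [hXval]
      _ = (lam2 - μ) * aL * (κ * μ + σ) := by ring
      _ ≤ α * aL^2 * (κ * μ + σ) - σ * (p * α * aL^2) := by linarith
      _ = aL * (α * ((κ * μ + σ) - σ * p)) * aL := by ring
    exact le_of_mul_le_mul_left (by linarith [h7]) hpos
  have htu : Tendsto n2a atTop (nhds X) := by
    apply tendsto_of_le_liminf_of_limsup_le ?_ ?_ hbu_le hbu_ge
    · rw [← haL_def]; exact hXa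
    · rw [← hA_def]; exact hAX
  have hY_eq : p * α * X^2 / (κ * μ + σ) = Y := by
    field_simp [ne_of_gt hc]
    linarith [hYval]
  have hBY : B ≤ Y := by
    have h1 : p * α * A ^ 2 / (κ * μ + σ) ≤ p * α * X ^ 2 / (κ * μ + σ) := by
      gcongr

    linarith [hE1, hY_eq]
  have hYb : Y ≤ bL := by
    have h1 : p * α * X ^ 2 / (κ * μ + σ) ≤ p * α * aL ^ 2 / (κ * μ + σ) := by
      gcongr
    linarith [hE2, hY_eq]
  have htv : Tendsto n2d atTop (nhds Y) := by
    apply tendsto_of_le_liminf_of_limsup_le ?_ ?_ hbv_le hbv_ge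
    · rw [← hbL_def]; exact hYb
    · rw [← hB_def]; exact hBY
  exact htu.prodMk_nhds htv
end

section
/- Let 0 < μ < λ2 < λ1, α > 0, σ > 0, κ ≥ 0 and p ∈ (0,1), assume the invasion condition λ1 − λ2 < p(λ1 − μ) σ/(κμ + σ), set n̄1 = (λ1 − μ)/α, let λ̃ > 0 be the largest eigenvalue of J = [[λ2 − λ1, p(λ1 − μ)], [σ, −κμ − σ]], and let (π_{2a}, π_{2d}) be the coordinatewise positive left eigenvector of J for λ̃ with π_{2a} + π_{2d} = 1. Then for every C > 0 there exists ε₀ > 0 such that for all ε ∈ (0, ε₀): whenever n1, n_{2a}, n_{2d} > 0 satisfy n1 ∈ (n̄1 − 2ε, n̄1 + 2ε), n_{2a} + n_{2d} ∈ (ε/C, √ε), and n_{2d}/n_{2a} = π_{2d}/π_{2a}, the triple (n1, n_{2a}, n_{2d}) satisfies pα(n1 + n_{2a})/(κμ + σ) > n_{2d}/n_{2a} > (μ − λ2 + α(n1 + n_{2a}))/σ. -/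
open Matrix

set_option maxHeartbeats 1000000 in
/-- Under the invasion condition, for every `C > 0` there exists
`ε₀ > 0` such that for all `ε ∈ (0, ε₀)`: any positive triple `(n1, n2a, n2d)` with
`n1 ∈ (n̄1 − 2ε, n̄1 + 2ε)`, `n2a + n2d ∈ (ε/C, √ε)` and `n2d/n2a = π2d/π2a`
(where `(π2a, π2d)` is the normalized positive left eigenvector of the mean matrix
`J` for its largest eigenvalue `λ̃ > 0`) lies in the attraction cone
`pα(n1+n2a)/(κμ+σ) > n2d/n2a > (μ−λ2+α(n1+n2a))/σ`. -/
theorem good_start_in_attraction_cone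
    (lam1 lam2 μ α σ κ p : ℝ)
    (hμ : 0 < μ) (hμlam : μ < lam2) (hlam : lam2 < lam1) (hα : 0 < α) (hσ : 0 < σ)
    (hκ : 0 ≤ κ) (hp0 : 0 < p) (hp1 : p < 1)
    (hinv : lam1 - lam2 < p * (lam1 - μ) * σ / (κ * μ + σ))
    (lamTilde : ℝ) (hlamTpos : 0 < lamTilde)
    (hlamTmem : lamTilde ∈ spectrum ℝ
      (!![lam2 - lam1, p * (lam1 - μ); σ, -(κ * μ) - σ] : Matrix (Fin 2) (Fin 2) ℝ))
    (hlamTmax : ∀ r : ℝ, r ∈ spectrum ℝ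
      (!![lam2 - lam1, p * (lam1 - μ); σ, -(κ * μ) - σ] : Matrix (Fin 2) (Fin 2) ℝ) →
      r ≤ lamTilde)
    (π : Fin 2 → ℝ) (hπa : 0 < π 0) (hπd : 0 < π 1) (hπsum : π 0 + π 1 = 1)
    (hπeig : π ᵥ* (!![lam2 - lam1, p * (lam1 - μ); σ, -(κ * μ) - σ] :
      Matrix (Fin 2) (Fin 2) ℝ) = lamTilde • π) :
    ∀ C > (0 : ℝ), ∃ ε₀ > (0 : ℝ), ∀ ε ∈ Set.Ioo (0 : ℝ) ε₀,
      ∀ n1 n2a n2d : ℝ, 0 < n1 → 0 < n2a → 0 < n2d →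
        n1 ∈ Set.Ioo ((lam1 - μ) / α - 2 * ε) ((lam1 - μ) / α + 2 * ε) →
        n2a + n2d ∈ Set.Ioo (ε / C) (Real.sqrt ε) →
        n2d / n2a = π 1 / π 0 →
        n2d / n2a < p * α * (n1 + n2a) / (κ * μ + σ) ∧
          (μ - lam2 + α * (n1 + n2a)) / σ < n2d / n2a := by
  intro C hC
  have hπa' := hπa.ne'
  have hκσ : 0 < κ * μ + σ := by positivity
  have h0 := congrFun hπeig 0
  have h1 := congrFun hπeig 1
  simp [Matrix.vecMul, dotProduct, Fin.sum_univ_two] at h0 h1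
  set r := π 1 / π 0 with hrdef
  have hrpos : 0 < r := div_pos hπd hπa
  -- h0 : π 0 * (lam2 - lam1) + π 1 * σ = lamTilde * π 0
  -- h1 : π 0 * (p * (lam1 - μ)) + π 1 * (-(κ * μ) - σ) = lamTilde * π 1
  have hr_lo : lam1 - lam2 < r * σ := by
    have : r * σ = lamTilde + (lam1 - lam2) := by
      rw [hrdef]; field_simp
      nlinarith [h0]
    linarith
  have hr_up : r * (κ * μ + σ) < p * (lam1 - μ) := by
    have heq : p * (lam1 - μ) = r * (lamTilde + κ * μ + σ) := by
      rw [hrdef]; field_simp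
      nlinarith [h1]
    nlinarith
  set δ1 : ℝ := p * (lam1 - μ) - r * (κ * μ + σ) with hδ1
  set δ2 : ℝ := r * σ - (lam1 - lam2) with hδ2
  have hδ1pos : 0 < δ1 := by simp [hδ1]; linarith
  have hδ2pos : 0 < δ2 := by simp [hδ2]; linarith
  refine ⟨min 1 (min (δ1 / (3 * p * α)) ((δ2 / (3 * α)) ^ 2)), by positivity, ?_⟩
  rintro ε ⟨hε0, hεlt⟩ n1 n2a n2d hn1 hn2a hn2d ⟨hn1lo, hn1hi⟩ ⟨hslo, hshi⟩ hratio
  rw [hratio]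
  have hε1 : ε < 1 := lt_of_lt_of_le hεlt (min_le_left _ _)
  have hεd1 : ε < δ1 / (3 * p * α) :=
    lt_of_lt_of_le hεlt ((min_le_right _ _).trans (min_le_left _ _))
  have hεd2 : ε < (δ2 / (3 * α)) ^ 2 :=
    lt_of_lt_of_le hεlt ((min_le_right _ _).trans (min_le_right _ _))
  have hsq : Real.sqrt ε < δ2 / (3 * α) := by
    have h3 : (0:ℝ) < δ2 / (3 * α) := by positivity
    have := Real.sqrt_lt_sqrt hε0.le hεd2
    rwa [Real.sqrt_sq h3.le] at this
  have hεsq : ε ≤ Real.sqrt ε := by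
    have h := Real.sqrt_le_sqrt (by nlinarith : ε ^ 2 ≤ ε)
    rwa [Real.sqrt_sq hε0.le] at h
  have hn2asmall : n2a < Real.sqrt ε := by linarith
  constructor
  · rw [lt_div_iff₀ hκσ]
    have h2ε : 2 * ε * (p * α) < δ1 := by
      have : ε * (3 * p * α) < δ1 := by
        rw [lt_div_iff₀ (by positivity)] at hεd1 ; linarith [hεd1]
      nlinarith
    have hαn : p * (lam1 - μ) - 2 * ε * (p * α) ≤ p * α * (n1 + n2a) := by
      have : (lam1 - μ) / α - 2 * ε < n1 + n2a := by linarith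
      have h := mul_lt_mul_of_pos_left this (by positivity : (0:ℝ) < p * α)
      have hfield : p * α * ((lam1 - μ) / α - 2 * ε)
          = p * (lam1 - μ) - 2 * ε * (p * α) := by field_simp
      linarith [hfield ▸ h]
    nlinarith
  · rw [div_lt_iff₀ hσ]
    have hαn : α * (n1 + n2a) < (lam1 - μ) + 3 * α * Real.sqrt ε := by
      have hup : n1 + n2a < (lam1 - μ) / α + 2 * ε + Real.sqrt ε := by linarith
      have h3 : n1 + n2a < (lam1 - μ) / α + 3 * Real.sqrt ε := by linarith
      have h := mul_lt_mul_of_pos_left h3 hα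
      have hfield : α * ((lam1 - μ) / α + 3 * Real.sqrt ε)
          = (lam1 - μ) + 3 * α * Real.sqrt ε := by field_simp
      linarith [hfield ▸ h]
    have hsq' : 3 * α * Real.sqrt ε < δ2 := by
      have := mul_lt_mul_of_pos_left hsq (by positivity : (0:ℝ) < 3 * α)
      calc 3 * α * Real.sqrt ε < 3 * α * (δ2 / (3 * α)) := this
        _ = δ2 := by field_simp
    nlinarith
end

section
/- Let 0 < μ < λ2 < λ1, σ > 0, κ ≥ 0 and p ∈ (0,1), assume the invasion condition λ1 − λ2 < p(λ1 − μ) σ/(κμ + σ), and define the quadratic polynomial S(x) = (λ2 + κμ − μ − (1−p)(λ1 − μ)) x(1 − x) + σ(1 − x) − p(λ1 − μ) x. Then S(0) > 0 and S(1) < 0, S has a unique root in the open interval (0,1), and this root equals π_{2a}, the first coordinate of the coordinatewise positive left eigenvector (π_{2a}, π_{2d}) of the matrix J = [[λ2 − λ1, p(λ1 − μ)], [σ, −κμ − σ]] associated to its largest eigenvalue λ̃, normalized by π_{2a} + π_{2d} = 1. -/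
open Matrix

/-- Under the invasion condition, the drift polynomial
`S(x) = (λ2 + κμ − μ − (1−p)(λ1 − μ)) x(1−x) + σ(1−x) − p(λ1 − μ)x` satisfies
`S(0) > 0`, `S(1) < 0`, and has a unique root in `(0,1)`, which equals `π2a`,
the first coordinate of the normalized positive left eigenvector of the mean matrix
`J` associated to its largest eigenvalue `λ̃`. -/
theorem drift_polynomial_unique_root
    (lam1 lam2 μ σ κ p : ℝ)
    (hμ : 0 < μ) (hμlam : μ < lam2) (hlam : lam2 < lam1) (hσ : 0 < σ)
    (hκ : 0 ≤ κ) (hp0 : 0 < p) (hp1 : p < 1)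
    (hinv : lam1 - lam2 < p * (lam1 - μ) * σ / (κ * μ + σ))
    (lamTilde : ℝ) (hlamTpos : 0 < lamTilde)
    (hlamTmem : lamTilde ∈ spectrum ℝ
      (!![lam2 - lam1, p * (lam1 - μ); σ, -(κ * μ) - σ] : Matrix (Fin 2) (Fin 2) ℝ))
    (hlamTmax : ∀ r : ℝ, r ∈ spectrum ℝ
      (!![lam2 - lam1, p * (lam1 - μ); σ, -(κ * μ) - σ] : Matrix (Fin 2) (Fin 2) ℝ) →
      r ≤ lamTilde)
    (π : Fin 2 → ℝ) (hπa : 0 < π 0) (hπd : 0 < π 1) (hπsum : π 0 + π 1 = 1)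
    (hπeig : π ᵥ* (!![lam2 - lam1, p * (lam1 - μ); σ, -(κ * μ) - σ] :
      Matrix (Fin 2) (Fin 2) ℝ) = lamTilde • π) :
    let S : ℝ → ℝ := fun x =>
      (lam2 + κ * μ - μ - (1 - p) * (lam1 - μ)) * (x * (1 - x)) +
        σ * (1 - x) - p * (lam1 - μ) * x
    S 0 > 0 ∧ S 1 < 0 ∧ π 0 ∈ Set.Ioo (0 : ℝ) 1 ∧
      ∀ x ∈ Set.Ioo (0 : ℝ) 1, (S x = 0 ↔ x = π 0) := by
  intro S
  have hlamμ : 0 < lam1 - μ := by linarith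
  have hb : 0 < p * (lam1 - μ) := mul_pos hp0 hlamμ
  have e0 := congrFun hπeig 0
  have e1 := congrFun hπeig 1
  simp [Matrix.vecMul, dotProduct, Fin.sum_univ_two] at e0 e1
  have hπ1 : π 1 = 1 - π 0 := by linarith
  rw [hπ1] at e0 e1
  have hSroot : S (π 0) = 0 := by
    show (lam2 + κ * μ - μ - (1 - p) * (lam1 - μ)) * (π 0 * (1 - π 0)) +
        σ * (1 - π 0) - p * (lam1 - μ) * π 0 = 0
    linear_combination (1 - π 0) * e0 - π 0 * e1
  have hπlt1 : π 0 < 1 := by linarith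
  refine ⟨by show _ > (0:ℝ); simp only [S]; ring_nf; nlinarith,
          by show _ < (0:ℝ); simp only [S]; ring_nf; nlinarith,
          ⟨hπa, hπlt1⟩, ?_⟩
  rintro x ⟨hx0, hx1⟩
  constructor
  · intro hSx
    by_contra hne
    set a := lam2 + κ * μ - μ - (1 - p) * (lam1 - μ) with ha
    set b := p * (lam1 - μ) with hbdef
    have hSx' : a * (x * (1 - x)) + σ * (1 - x) - b * x = 0 := hSx
    have hSp' : a * (π 0 * (1 - π 0)) + σ * (1 - π 0) - b * π 0 = 0 := hSroot
    have hd : x - π 0 ≠ 0 := sub_ne_zero.mpr hne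
    have h3 : a * (1 - x - π 0) = σ + b := by
      have h := mul_left_cancel₀ hd (show (x - π 0) * (a * (1 - x - π 0)) =
          (x - π 0) * (σ + b) by linear_combination hSx' - hSp')
      exact h
    have h4 : a * x * π 0 = -σ := by linear_combination hSx' - x * h3
    have haneg : a < 0 := by nlinarith [mul_pos hx0 hπa]
    have h5 : b = a * (1 - x) * (1 - π 0) := by linear_combination -h3 - h4
    nlinarith [mul_pos (sub_pos.mpr hx1) (sub_pos.mpr hπlt1)]
  · rintro rfl
    exact hSroot
end

section
/- Let λ2, μ, σ, σ' > 0 and κ ≥ 0, and consider the real 2×2 matrix M = [[λ2 − μ − σ', σ], [σ', −(κμ + σ)]], the linearization at the origin of the mutant system with spontaneous switching. Then every complex eigenvalue of M has strictly negative real part if and only if λ2 < μ + κμσ'/(κμ + σ). In particular, for κ > 0 there exist values λ2 > μ for which the origin is asymptotically stable, i.e. the mutant population with spontaneous switching dies out in the deterministic limit despite λ2 > μ. -/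
open Matrix

lemma mem_spec_fin_two (A : Matrix (Fin 2) (Fin 2) ℂ) (z : ℂ) :
    z ∈ spectrum ℂ A ↔ (z - A 0 0) * (z - A 1 1) - A 0 1 * A 1 0 = 0 := by
  rw [spectrum.mem_iff, Matrix.isUnit_iff_isUnit_det, isUnit_iff_ne_zero, not_not,
    Matrix.det_fin_two]
  simp [Matrix.algebraMap_matrix_apply, Matrix.sub_apply]

/-- For the spontaneous-switching linearization
`M = [[λ2 − μ − σ', σ], [σ', −(κμ + σ)]]`, every complex eigenvalue of `M` has
strictly negative real part iff `λ2 < μ + κμσ'/(κμ + σ)`. In particular, for `κ > 0`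
there exist values `λ2 > μ` for which the origin is asymptotically stable. -/
theorem spontaneous_switching_origin_stability
    (lam2 μ σ σ' κ : ℝ)
    (hlam2 : 0 < lam2) (hμ : 0 < μ) (hσ : 0 < σ) (hσ' : 0 < σ') (hκ : 0 ≤ κ) :
    let M : Matrix (Fin 2) (Fin 2) ℝ :=
      !![lam2 - μ - σ', σ; σ', -(κ * μ + σ)]
    ((∀ z : ℂ, z ∈ spectrum ℂ (M.map Complex.ofReal) → z.re < 0) ↔
        lam2 < μ + κ * μ * σ' / (κ * μ + σ)) ∧
      (0 < κ → ∃ lam2' : ℝ, μ < lam2' ∧ lam2' < μ + κ * μ * σ' / (κ * μ + σ)) := by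
  intro M
  have hs : 0 < κ * μ + σ := by positivity
  -- abbreviations
  set a : ℝ := lam2 - μ - σ' with ha
  set d : ℝ := -(κ * μ + σ) with hd
  set T : ℝ := a + d with hT
  set D : ℝ := a * d - σ * σ' with hD
  -- the threshold condition is equivalent to D > 0
  have hthr : (lam2 < μ + κ * μ * σ' / (κ * μ + σ)) ↔ 0 < D := by
    rw [show μ + κ * μ * σ' / (κ * μ + σ) = (μ * (κ * μ + σ) + κ * μ * σ') / (κ * μ + σ) by
      field_simp]
    rw [lt_div_iff₀ hs]
    constructor <;> intro h <;> nlinarith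
  -- spectrum membership in terms of a quadratic
  have hmem : ∀ z : ℂ, z ∈ spectrum ℂ (M.map Complex.ofReal) ↔
      (z - (a : ℂ)) * (z - (d : ℂ)) - (σ : ℂ) * (σ' : ℂ) = 0 := by
    intro z
    rw [mem_spec_fin_two]
    simp only [M, Matrix.map_apply]
    norm_num [ha, hd]
  constructor
  · constructor
    · -- stability → D > 0 → threshold
      intro h
      rw [hthr]
      by_contra hge
      push_neg at hge
      -- D ≤ 0 : construct a nonnegative real eigenvalue
      have hsq : (0:ℝ) ≤ T ^ 2 - 4 * D := by nlinarith
      set s : ℝ := Real.sqrt (T ^ 2 - 4 * D) with hsdef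
      have hs2 : s ^ 2 = T ^ 2 - 4 * D := Real.sq_sqrt hsq
      have hs0 : 0 ≤ s := Real.sqrt_nonneg _
      have habs : |T| ≤ s := by
        rw [← Real.sqrt_sq_eq_abs]
        exact Real.sqrt_le_sqrt (by nlinarith)
      have hx0 : 0 ≤ (T + s) / 2 := by
        have := neg_abs_le T
        linarith
      have hz : (((T + s) / 2 : ℝ) : ℂ) ∈ spectrum ℂ (M.map Complex.ofReal) := by
        rw [hmem]
        have h0 : ((T + s) / 2 - a) * ((T + s) / 2 - d) - σ * σ' = 0 := by nlinarith
        have h1 : ((((T + s) / 2 - a) * ((T + s) / 2 - d) - σ * σ' : ℝ) : ℂ) = 0 := by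
          exact_mod_cast h0
        push_cast at h1 ⊢
        linear_combination h1
      have := h _ hz
      rw [Complex.ofReal_re] at this
      linarith
    · -- threshold → stability
      intro hlt z hz
      have hDpos : 0 < D := hthr.mp hlt
      have hTneg : T < 0 := by
        -- κ μ σ' / (κ μ + σ) ≤ σ'
        have h1 : κ * μ * σ' / (κ * μ + σ) ≤ σ' := by
          rw [div_le_iff₀ hs]; nlinarith
        have : lam2 < μ + σ' := by linarith
        simp only [hT, ha, hd]
        nlinarith
      rw [hmem] at hz
      set x : ℝ := z.re with hx
      set y : ℝ := z.im with hy
      have e1 : (x - a) * (x - d) - y * y - σ * σ' = 0 := by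
        have := congrArg Complex.re hz
        simpa [Complex.mul_re, Complex.sub_re, Complex.sub_im, Complex.ofReal_re,
          Complex.ofReal_im] using this
      have e2 : y * (x - a) + y * (x - d) = 0 := by
        have := congrArg Complex.im hz
        simp [Complex.mul_im, Complex.sub_re, Complex.sub_im, Complex.ofReal_re,
          Complex.ofReal_im] at this
        linarith [this]
      show x < 0
      rcases eq_or_ne y 0 with hy0 | hy0
      · -- real eigenvalue: x² - T x + D = 0 with T < 0, D > 0
        rw [hy0] at e1
        by_contra hge
        push_neg at hge
        nlinarith
      · -- complex eigenvalue: 2x = T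
        have h2x : 2 * x - T = 0 := by
          have := mul_eq_zero.mp (show y * (2 * x - T) = 0 by rw [hT]; linarith [e2])
          tauto
        linarith
  · -- existence of λ2' with μ < λ2' < threshold when κ > 0
    intro hκpos
    have hε : 0 < κ * μ * σ' / (κ * μ + σ) := by positivity
    exact ⟨μ + κ * μ * σ' / (κ * μ + σ) / 2, by linarith, by linarith⟩
end
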